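/- arXiv:1503.06211 — 7 statements merged into one kernel-verified Lean document; each statement's English description precedes it below -/
import Mathlib

section
/- Let b > 0 and 0 ≤ α < π/2, and let f be holomorphic on the sector S_α = {w ∈ ℂ : w ≠ 0, α − π/2 < arg w < π/2 − α}. Suppose that for every σ ∈ (0, b) and every θ ∈ (α − π/2, π/2 − α) one has ∫_0^∞ |f(e^{iθ} x)|·x^{σ − 1} dx < ∞. Then for every λ > 0, every σ ∈ (0, b) and every θ ∈ (α − π/2, π/2 − α) one has ∫_0^∞ e^{−λ t}·t^{σ − 1}·( ∫_0^t e^{λ x}·|f(e^{iθ} x)| dx ) dt < ∞. -/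
open Complex MeasureTheory Real Set


/-- `u^n ≤ n! c⁻¹^n exp (c u)` for `u ≥ 0`. -/
lemma aux_pow_le_exp {c : ℝ} (hc : 0 < c) (n : ℕ) {u : ℝ} (hu : 0 ≤ u) :
    u ^ n ≤ n.factorial * c⁻¹ ^ n * Real.exp (c * u) := by
  have h1 : (c * u) ^ n / n.factorial ≤ Real.exp (c * u) := by
    refine le_trans ?_ (Real.sum_le_exp_of_nonneg (by positivity) (n + 1))
    exact Finset.single_le_sum (f := fun i => (c * u) ^ i / i.factorial)
      (fun i _ => by positivity) (Finset.self_mem_range_succ n)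
  have h2 : u ^ n = n.factorial * c⁻¹ ^ n * ((c*u) ^ n / n.factorial) := by
    rw [mul_pow]; field_simp
    rw [mul_assoc, ← mul_pow, one_div, inv_mul_cancel₀ hc.ne', one_pow, mul_one]
  rw [h2]
  have : (0:ℝ) < n.factorial := by positivity
  gcongr

/-- rpow is controlled by an exponential. -/
lemma aux_rpow_le_exp {c : ℝ} (hc : 0 < c) {s : ℝ} (hs : 0 ≤ s) :
    ∃ C : ℝ, 1 ≤ C ∧ ∀ u : ℝ, 0 ≤ u → u ^ s ≤ C * Real.exp (c * u) := by
  set n := ⌈s⌉₊ with hn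
  refine ⟨1 + n.factorial * c⁻¹ ^ n, le_add_of_nonneg_right (by positivity), fun u hu => ?_⟩
  have hexp : (1:ℝ) ≤ Real.exp (c * u) := by
    rw [Real.one_le_exp_iff]; positivity
  rcases le_total u 1 with h | h
  · have h1 : u ^ s ≤ 1 := Real.rpow_le_one hu h hs
    nlinarith [(Nat.cast_pos (α := ℝ)).mpr n.factorial_pos, pow_nonneg (inv_nonneg.mpr hc.le) n,
      mul_nonneg (mul_nonneg (Nat.cast_nonneg n.factorial) (pow_nonneg (inv_nonneg.mpr hc.le) n)) (by linarith : (0:ℝ) ≤ Real.exp (c*u) - 1)]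
  · have h1 : u ^ s ≤ u ^ (n : ℝ) :=
      Real.rpow_le_rpow_of_exponent_le h (Nat.le_ceil s)
    rw [Real.rpow_natCast] at h1
    have h2 := aux_pow_le_exp hc n hu
    have h3 : (0:ℝ) ≤ n.factorial * c⁻¹ ^ n := by positivity
    nlinarith

/-- Key pointwise bound: for `0 < x ≤ t`,
`exp(-l t) t^(σ-1) ≤ D (x^(σ-1) + x^(min σ 1 - 1)) exp(-(l/2) x) exp(-(l/2) t)`. -/
lemma aux_key_bound {l σ : ℝ} (hl : 0 < l) (hσ : 0 < σ) :
    ∃ D : ℝ, 0 < D ∧ ∀ x t : ℝ, 0 < x → x ≤ t →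
      Real.exp (-l * t) * t ^ (σ - 1) ≤
        D * (x ^ (σ - 1) + x ^ (min σ 1 - 1)) * (Real.exp (-(l/2) * x) * Real.exp (-(l/2) * t)) := by
  have hl2 : 0 < l / 2 := by linarith
  rcases le_or_gt σ 1 with hσ1 | hσ1
  · refine ⟨1, one_pos, fun x t hx hxt => ?_⟩
    have ht : 0 < t := lt_of_lt_of_le hx hxt
    have h1 : t ^ (σ - 1) ≤ x ^ (σ - 1) :=
      Real.rpow_le_rpow_of_nonpos hx hxt (by linarith)
    have h2 : Real.exp (-l * t) = Real.exp (-(l/2) * t) * Real.exp (-(l/2) * t) := by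
      rw [← Real.exp_add]; ring_nf
    have h3 : Real.exp (-(l/2) * t) ≤ Real.exp (-(l/2) * x) := by
      apply Real.exp_le_exp.mpr; nlinarith
    have h4 : (0:ℝ) ≤ x ^ (min σ 1 - 1) := Real.rpow_nonneg hx.le _
    calc Real.exp (-l * t) * t ^ (σ - 1)
        ≤ Real.exp (-l * t) * x ^ (σ - 1) := by
          exact mul_le_mul_of_nonneg_left h1 (Real.exp_nonneg _)
      _ = x ^ (σ - 1) * (Real.exp (-(l/2) * t) * Real.exp (-(l/2) * t)) := by rw [h2]; ring
      _ ≤ (x ^ (σ - 1) + x ^ (min σ 1 - 1)) * (Real.exp (-(l/2) * x) * Real.exp (-(l/2) * t)) := by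
          have := Real.rpow_nonneg hx.le (σ - 1)
          have h5 : Real.exp (-(l/2) * t) * Real.exp (-(l/2) * t)
              ≤ Real.exp (-(l/2) * x) * Real.exp (-(l/2) * t) :=
            mul_le_mul_of_nonneg_right h3 (Real.exp_nonneg _)
          nlinarith [Real.exp_nonneg (-(l/2) * x), Real.exp_nonneg (-(l/2) * t)]
      _ = 1 * (x ^ (σ - 1) + x ^ (min σ 1 - 1)) * (Real.exp (-(l/2) * x) * Real.exp (-(l/2) * t)) := by ring
  · obtain ⟨C, hC1, hC⟩ := aux_rpow_le_exp hl2 (by linarith : (0:ℝ) ≤ σ - 1)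
    refine ⟨(2:ℝ) ^ (σ - 1) * C, by positivity, fun x t hx hxt => ?_⟩
    have ht : 0 < t := lt_of_lt_of_le hx hxt
    have hmin : min σ 1 = 1 := min_eq_right hσ1.le
    have hx0 : x ^ (min σ 1 - 1) = 1 := by rw [hmin]; simp
    -- subadditivity: t^(σ-1) ≤ 2^(σ-1) * (x^(σ-1) + (t-x)^(σ-1))
    have hsub : t ^ (σ - 1) ≤ (2:ℝ) ^ (σ - 1) * (x ^ (σ - 1) + (t - x) ^ (σ - 1)) := by
      rcases le_total (t - x) x with h | h
      · have h1 : t ≤ 2 * x := by linarith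
        have h2 : t ^ (σ - 1) ≤ (2 * x) ^ (σ - 1) :=
          Real.rpow_le_rpow ht.le h1 (by linarith)
        rw [Real.mul_rpow (by norm_num) hx.le] at h2
        have h3 : (0:ℝ) ≤ (t - x) ^ (σ - 1) := Real.rpow_nonneg (by linarith) _
        nlinarith [Real.rpow_nonneg (le_of_lt (by norm_num : (0:ℝ) < 2)) (σ - 1)]
      · have h1 : t ≤ 2 * (t - x) := by linarith
        have h2 : t ^ (σ - 1) ≤ (2 * (t - x)) ^ (σ - 1) :=
          Real.rpow_le_rpow ht.le h1 (by linarith)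
        rw [Real.mul_rpow (by norm_num) (by linarith)] at h2
        have h3 : (0:ℝ) ≤ x ^ (σ - 1) := Real.rpow_nonneg hx.le _
        nlinarith [Real.rpow_nonneg (le_of_lt (by norm_num : (0:ℝ) < 2)) (σ - 1)]
    have hexp1 : (t - x) ^ (σ - 1) ≤ C * Real.exp (l/2 * (t - x)) := hC _ (by linarith)
    have hexpx : x ^ (σ - 1) ≤ C * x ^ (σ - 1) * Real.exp (l/2 * (t - x)) := by
      have he : (1:ℝ) ≤ Real.exp (l/2 * (t - x)) := by
        rw [Real.one_le_exp_iff]; nlinarith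
      have hxp : (0:ℝ) ≤ x ^ (σ - 1) := Real.rpow_nonneg hx.le (σ - 1)
      have hce : (1:ℝ) ≤ C * Real.exp (l/2 * (t - x)) := by nlinarith
      calc x ^ (σ - 1) = 1 * x ^ (σ - 1) := (one_mul _).symm
        _ ≤ (C * Real.exp (l/2 * (t - x))) * x ^ (σ - 1) := mul_le_mul_of_nonneg_right hce hxp
        _ = C * x ^ (σ - 1) * Real.exp (l/2 * (t - x)) := by ring
    have hfinal : t ^ (σ - 1) ≤ (2:ℝ) ^ (σ - 1) * C * (x ^ (σ - 1) + 1) * Real.exp (l/2 * (t - x)) := by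
      have h2p : (0:ℝ) ≤ (2:ℝ) ^ (σ - 1) := Real.rpow_nonneg (by norm_num) _
      have he : (0:ℝ) < Real.exp (l/2 * (t - x)) := Real.exp_pos _
      have hxp : (0:ℝ) ≤ x ^ (σ - 1) := Real.rpow_nonneg hx.le _
      calc t ^ (σ - 1) ≤ (2:ℝ) ^ (σ - 1) * (x ^ (σ - 1) + (t - x) ^ (σ - 1)) := hsub
        _ ≤ (2:ℝ) ^ (σ - 1) * (C * x ^ (σ - 1) * Real.exp (l/2 * (t - x)) + C * Real.exp (l/2 * (t - x))) := by
            have := hexp1; have := hexpx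
            apply mul_le_mul_of_nonneg_left _ h2p
            linarith
        _ = (2:ℝ) ^ (σ - 1) * C * (x ^ (σ - 1) + 1) * Real.exp (l/2 * (t - x)) := by ring
    rw [hx0]
    have hee : Real.exp (-l * t) * Real.exp (l/2 * (t - x)) = Real.exp (-(l/2) * x) * Real.exp (-(l/2) * t) := by
      rw [← Real.exp_add, ← Real.exp_add]; ring_nf
    calc Real.exp (-l * t) * t ^ (σ - 1)
        ≤ Real.exp (-l * t) * ((2:ℝ) ^ (σ - 1) * C * (x ^ (σ - 1) + 1) * Real.exp (l/2 * (t - x))) :=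
          mul_le_mul_of_nonneg_left hfinal (Real.exp_nonneg _)
      _ = (2:ℝ) ^ (σ - 1) * C * (x ^ (σ - 1) + 1) * (Real.exp (-l * t) * Real.exp (l/2 * (t - x))) := by ring
      _ = (2:ℝ) ^ (σ - 1) * C * (x ^ (σ - 1) + 1) * (Real.exp (-(l/2) * x) * Real.exp (-(l/2) * t)) := by rw [hee]

lemma aux_integral_exp_neg_mul_Ioi {c : ℝ} (hc : 0 < c) (x : ℝ) :
    ∫ t in Ioi x, Real.exp (-(c * t)) = c⁻¹ * Real.exp (-(c * x)) := by
  have h := integral_comp_mul_right_Ioi (fun u => Real.exp (-u)) x hc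
  simp only [smul_eq_mul] at h
  have h2 : ∀ t : ℝ, Real.exp (-(c * t)) = Real.exp (-(t * c)) := fun t => by rw [mul_comm]
  calc ∫ t in Ioi x, Real.exp (-(c * t)) = ∫ t in Ioi x, Real.exp (-(t * c)) := by
        simp_rw [mul_comm]
    _ = c⁻¹ * ∫ u in Ioi (x * c), Real.exp (-u) := h
    _ = c⁻¹ * Real.exp (-(c * x)) := by rw [integral_exp_neg_Ioi, mul_comm x c]



/-- Lemma 2 of the paper. If `f` is holomorphic on the sector `S_α` and all
its weighted Mellin integrals converge absolutely, then for every `λ > 0`, `σ ∈ (0,b)` and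
admissible `θ`, the iterated integral
`∫_0^∞ e^{-λt} t^{σ-1} (∫_0^t e^{λx} |f(e^{iθ}x)| dx) dt` is finite. -/
theorem stmt2 (b : ℝ) (hb : 0 < b) (α : ℝ) (hα0 : 0 ≤ α) (hα : α < π / 2)
    (f : ℂ → ℂ)
    (hf : DifferentiableOn ℂ f {w : ℂ | w ≠ 0 ∧ α - π / 2 < w.arg ∧ w.arg < π / 2 - α})
    (hint : ∀ σ ∈ Set.Ioo (0 : ℝ) b, ∀ θ : ℝ, α - π / 2 < θ → θ < π / 2 - α →
      IntegrableOn
        (fun x : ℝ => ‖f (Complex.exp (θ * Complex.I) * x)‖ * x ^ (σ - 1))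
        (Set.Ioi (0 : ℝ))) :
    ∀ l : ℝ, 0 < l → ∀ σ ∈ Set.Ioo (0 : ℝ) b, ∀ θ : ℝ, α - π / 2 < θ → θ < π / 2 - α →
      IntegrableOn
        (fun t : ℝ => Real.exp (-l * t) * t ^ (σ - 1) *
          ∫ x in Set.Ioc (0 : ℝ) t, Real.exp (l * x) *
            ‖f (Complex.exp (θ * Complex.I) * x)‖)
        (Set.Ioi (0 : ℝ)) := by
  intro l hl σ hσ θ hθ1 hθ2
  obtain ⟨hσ0, hσb⟩ := hσ
  set g : ℝ → ℝ := fun x : ℝ => ‖f (Complex.exp (θ * Complex.I) * x)‖ with hgdef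
  set σ₀ : ℝ := min σ 1 with hσ₀def
  have hσ₀0 : 0 < σ₀ := lt_min hσ0 one_pos
  have hσ₀b : σ₀ < b := lt_of_le_of_lt (min_le_left _ _) hσb
  have hgσ : IntegrableOn (fun x : ℝ => g x * x ^ (σ - 1)) (Ioi 0) :=
    hint σ ⟨hσ0, hσb⟩ θ hθ1 hθ2
  have hgσ₀ : IntegrableOn (fun x : ℝ => g x * x ^ (σ₀ - 1)) (Ioi 0) :=
    hint σ₀ ⟨hσ₀0, hσ₀b⟩ θ hθ1 hθ2
  have hgnn : ∀ x : ℝ, 0 ≤ g x := fun x => norm_nonneg _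
  -- a.e. strong measurability of `g` on `(0,∞)`
  have hgm : AEStronglyMeasurable g (volume.restrict (Ioi 0)) := by
    have h2 : AEStronglyMeasurable (fun x : ℝ => x ^ (1 - σ₀)) (volume.restrict (Ioi 0)) :=
      (measurable_id.pow_const (1 - σ₀)).aestronglyMeasurable
    refine (hgσ₀.aestronglyMeasurable.mul h2).congr ?_
    filter_upwards [ae_restrict_mem measurableSet_Ioi] with x hx
    have hxpos : (0:ℝ) < x := hx
    simp only [Pi.mul_apply]
    rw [mul_assoc, ← Real.rpow_add hxpos]
    norm_num
  set W : ℝ → ℝ := fun t : ℝ => Real.exp (-l * t) * t ^ (σ - 1) with hWdef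
  set H : ℝ → ℝ := fun x : ℝ => Real.exp (l * x) * g x with hHdef
  set S : Set (ℝ × ℝ) := {p : ℝ × ℝ | p.2 ∈ Set.Ioc 0 p.1} with hSdef
  have hSm : MeasurableSet S := by
    have hSeq : S = {p : ℝ × ℝ | 0 < p.2} ∩ {p : ℝ × ℝ | p.2 ≤ p.1} := rfl
    rw [hSeq]
    exact (measurableSet_lt measurable_const measurable_snd).inter
      (measurableSet_le measurable_snd measurable_fst)
  set F : ℝ × ℝ → ℝ := S.indicator (fun p => W p.1 * H p.2) with hFdef
  have hWm : Measurable W :=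
    ((measurable_id.const_mul (-l)).exp.mul (measurable_id.pow_const (σ - 1)))
  have hHm : AEStronglyMeasurable H (volume.restrict (Ioi 0)) :=
    ((measurable_id.const_mul l).exp.aestronglyMeasurable.mul hgm)
  have hFm : AEStronglyMeasurable F
      ((volume.restrict (Ioi 0)).prod (volume.restrict (Ioi 0))) :=
    ((hWm.aestronglyMeasurable.comp_fst).mul hHm.comp_snd).indicator hSm
  have hWint : IntegrableOn W (Ioi 0) := by
    have h := integrableOn_rpow_mul_exp_neg_mul_rpow (p := 1) (s := σ - 1) (b := l)
      (by linarith) one_pos hl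
    refine h.congr_fun (fun x hx => ?_) measurableSet_Ioi
    simp only [hWdef, Real.rpow_one, neg_mul]
    ring
  have hWnn : ∀ t : ℝ, 0 < t → 0 ≤ W t := fun t ht =>
    mul_nonneg (Real.exp_nonneg _) (Real.rpow_nonneg ht.le _)
  have hHnn : ∀ x : ℝ, 0 ≤ H x := fun x => mul_nonneg (Real.exp_nonneg _) (hgnn x)
  obtain ⟨D, hD, hkey⟩ := aux_key_bound hl hσ0
  rw [← hσ₀def] at hkey
  -- condition 1 of integrable_prod_iff'
  have cond1 : ∀ᵐ x ∂(volume.restrict (Ioi (0:ℝ))),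
      Integrable (fun t => F (t, x)) (volume.restrict (Ioi (0:ℝ))) := by
    rw [ae_restrict_iff' measurableSet_Ioi]
    refine Filter.Eventually.of_forall (fun x hx => ?_)
    have hxpos : (0:ℝ) < x := hx
    have hfe : (fun t => F (t, x)) = (Set.Ici x).indicator (fun t => W t * H x) := by
      funext t
      by_cases h : x ≤ t
      · have hmem : (t, x) ∈ S := ⟨hxpos, h⟩
        rw [hFdef, Set.indicator_of_mem hmem, Set.indicator_of_mem (Set.mem_Ici.mpr h)]
      · have hmem : (t, x) ∉ S := fun hc => h hc.2
        rw [hFdef, Set.indicator_of_notMem hmem,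
          Set.indicator_of_notMem (fun hc => h (Set.mem_Ici.mp hc))]
    rw [hfe]
    exact (hWint.mul_const (H x)).indicator measurableSet_Ici
  -- condition 2 of integrable_prod_iff'
  have cond2 : Integrable (fun x => ∫ t, ‖F (t, x)‖ ∂(volume.restrict (Ioi (0:ℝ))))
      (volume.restrict (Ioi (0:ℝ))) := by
    have hGint : Integrable
        (fun x => (D * (2/l)) * (g x * x ^ (σ - 1) + g x * x ^ (σ₀ - 1)))
        (volume.restrict (Ioi (0:ℝ))) := (hgσ.add hgσ₀).const_mul _
    refine Integrable.mono' hGint ((hFm.norm.prod_swap).integral_prod_right') ?_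
    rw [ae_restrict_iff' measurableSet_Ioi]
    refine Filter.Eventually.of_forall (fun x hx => ?_)
    have hxpos : (0:ℝ) < x := hx
    have hnorm_eq : (fun t => ‖F (t, x)‖) = (Set.Ici x).indicator (fun t => W t * H x) := by
      funext t
      by_cases h : x ≤ t
      · have hmem : (t, x) ∈ S := ⟨hxpos, h⟩
        have ht : 0 < t := lt_of_lt_of_le hxpos h
        rw [hFdef, Set.indicator_of_mem hmem, Set.indicator_of_mem (Set.mem_Ici.mpr h)]
        exact Real.norm_of_nonneg (mul_nonneg (hWnn t ht) (hHnn x))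
      · have hmem : (t, x) ∉ S := fun hc => h hc.2
        rw [hFdef, Set.indicator_of_notMem hmem,
          Set.indicator_of_notMem (fun hc => h (Set.mem_Ici.mp hc)), norm_zero]
    have hss : Set.Ici x ∩ Set.Ioi (0:ℝ) = Set.Ici x :=
      Set.inter_eq_left.mpr (fun y hy => lt_of_lt_of_le hxpos hy)
    rw [hnorm_eq, integral_indicator measurableSet_Ici,
      Measure.restrict_restrict measurableSet_Ici, hss, integral_mul_const]
    -- now bound (∫ t in Ici x, W t) * H x
    have hJ : ∫ t in Set.Ici x, W t ≤
        D * (x ^ (σ - 1) + x ^ (σ₀ - 1)) * Real.exp (-(l/2) * x) *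
          ((l/2)⁻¹ * Real.exp (-(l/2) * x)) := by
      rw [integral_Ici_eq_integral_Ioi]
      have hint1 : IntegrableOn W (Ioi x) := hWint.mono_set (Ioi_subset_Ioi hxpos.le)
      have hint2 : IntegrableOn
          (fun t => (D * (x ^ (σ - 1) + x ^ (σ₀ - 1)) * Real.exp (-(l/2) * x)) *
            Real.exp (-(l/2) * t)) (Ioi x) :=
        (exp_neg_integrableOn_Ioi x (by linarith : (0:ℝ) < l/2)).const_mul _
      calc ∫ t in Ioi x, W t
          ≤ ∫ t in Ioi x, (D * (x ^ (σ - 1) + x ^ (σ₀ - 1)) * Real.exp (-(l/2) * x)) *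
              Real.exp (-(l/2) * t) := by
            refine setIntegral_mono_on hint1 hint2 measurableSet_Ioi (fun t ht => ?_)
            have h := hkey x t hxpos (le_of_lt ht)
            calc W t ≤ D * (x ^ (σ - 1) + x ^ (σ₀ - 1)) *
                (Real.exp (-(l/2) * x) * Real.exp (-(l/2) * t)) := h
              _ = (D * (x ^ (σ - 1) + x ^ (σ₀ - 1)) * Real.exp (-(l/2) * x)) *
                  Real.exp (-(l/2) * t) := by ring
        _ = (D * (x ^ (σ - 1) + x ^ (σ₀ - 1)) * Real.exp (-(l/2) * x)) *
            ∫ t in Ioi x, Real.exp (-(l/2) * t) := integral_const_mul _ _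
        _ = D * (x ^ (σ - 1) + x ^ (σ₀ - 1)) * Real.exp (-(l/2) * x) *
            ((l/2)⁻¹ * Real.exp (-(l/2) * x)) := by
            have h1 : ∀ t : ℝ, Real.exp (-(l/2) * t) = Real.exp (-((l/2) * t)) := fun t => by
              rw [neg_mul]
            simp_rw [h1]
            rw [aux_integral_exp_neg_mul_Ioi (by linarith : (0:ℝ) < l/2) x]
    have hIx_nn : 0 ≤ ∫ t in Set.Ici x, W t :=
      setIntegral_nonneg measurableSet_Ici (fun t ht => hWnn t (lt_of_lt_of_le hxpos ht))
    rw [Real.norm_eq_abs, _root_.abs_of_nonneg (mul_nonneg hIx_nn (hHnn x))]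
    have hexpcancel : Real.exp (-(l/2) * x) * ((l/2)⁻¹ * Real.exp (-(l/2) * x)) *
        Real.exp (l * x) = (l/2)⁻¹ := by
      rw [show Real.exp (-(l/2) * x) * ((l/2)⁻¹ * Real.exp (-(l/2) * x)) * Real.exp (l * x)
          = (l/2)⁻¹ * (Real.exp (-(l/2) * x) * Real.exp (-(l/2) * x) * Real.exp (l * x)) by ring,
        ← Real.exp_add, ← Real.exp_add, show -(l/2) * x + -(l/2) * x + l * x = 0 by ring,
        Real.exp_zero, mul_one]
    have hinv : ((l:ℝ)/2)⁻¹ = 2/l := by rw [inv_div]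
    calc (∫ t in Set.Ici x, W t) * H x
        ≤ (D * (x ^ (σ - 1) + x ^ (σ₀ - 1)) * Real.exp (-(l/2) * x) *
            ((l/2)⁻¹ * Real.exp (-(l/2) * x))) * H x :=
          mul_le_mul_of_nonneg_right hJ (hHnn x)
      _ = D * (x ^ (σ - 1) + x ^ (σ₀ - 1)) * g x *
          (Real.exp (-(l/2) * x) * ((l/2)⁻¹ * Real.exp (-(l/2) * x)) * Real.exp (l * x)) := by
          rw [hHdef]; ring
      _ = D * (x ^ (σ - 1) + x ^ (σ₀ - 1)) * g x * (l/2)⁻¹ := by rw [hexpcancel]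
      _ = (D * (2/l)) * (g x * x ^ (σ - 1) + g x * x ^ (σ₀ - 1)) := by rw [hinv]; ring
  -- combine via Tonelli
  have hFint : Integrable F ((volume.restrict (Ioi (0:ℝ))).prod (volume.restrict (Ioi (0:ℝ)))) :=
    (integrable_prod_iff' hFm).2 ⟨cond1, cond2⟩
  have hmain := hFint.integral_prod_left
  refine hmain.congr (Filter.Eventually.of_forall (fun t => ?_))
  show ∫ x, F (t, x) ∂(volume.restrict (Ioi (0:ℝ))) = _
  have h1 : (fun x => F (t, x)) = (Set.Ioc 0 t).indicator (fun x => W t * H x) := by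
    funext x
    by_cases h : x ∈ Set.Ioc (0:ℝ) t
    · rw [hFdef, Set.indicator_of_mem (show (t, x) ∈ S from h), Set.indicator_of_mem h]
    · rw [hFdef, Set.indicator_of_notMem (show (t, x) ∉ S from h), Set.indicator_of_notMem h]
  rw [h1, integral_indicator measurableSet_Ioc,
    Measure.restrict_restrict measurableSet_Ioc,
    Set.inter_eq_left.mpr Set.Ioc_subset_Ioi_self, integral_const_mul]
end

section
/- Let b > 1, let 0 ≤ α < π/2 and C > 0, and let φ be holomorphic on the vertical strip {z ∈ ℂ : 0 < Re z < b} with |φ(z)| ≤ C·exp(α·|Im z|) there. Fix σ ∈ (1, b) and define f(x) = (1/(2π)) ∫_{t ∈ ℝ} Γ(σ + i t)·φ(σ + i t)·x^{−(σ + i t)} dt for x > 0. Then f is differentiable on (0, ∞) and for every x > 0 one has (1/(2π)) ∫_{t ∈ ℝ} Γ(σ + i t)·( φ(σ + i t) − φ(σ − 1 + i t) )·x^{−(σ + i t)} dt = f(x) + f′(x), the left-hand integral converging absolutely. -/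
open Complex MeasureTheory Real Set

lemma aux_integrable_exp_neg_mul_abs {δ : ℝ} (hδ : 0 < δ) :
    Integrable (fun t : ℝ => Real.exp (-δ * |t|)) := by
  have h1 : IntegrableOn (fun t : ℝ => Real.exp (-δ * |t|)) (Ioi 0) := by
    refine (exp_neg_integrableOn_Ioi 0 hδ).congr_fun (fun t ht => ?_) measurableSet_Ioi
    rw [abs_of_pos ht]
  have h2 : IntegrableOn (fun t : ℝ => Real.exp (-δ * |t|)) (Iic 0) := by
    have h0 : Integrable ((Iic (0:ℝ)).indicator Real.exp) :=
      (integrable_indicator_iff measurableSet_Iic).2 (integrableOn_exp_Iic 0)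
    have h := (integrable_comp_mul_left_iff ((Iic (0:ℝ)).indicator Real.exp)
      (ne_of_gt hδ)).2 h0
    have heq : (fun x => (Iic (0:ℝ)).indicator Real.exp (δ * x)) =ᵐ[volume]
        (Iic (0:ℝ)).indicator (fun t => Real.exp (-δ * |t|)) := by
      refine Filter.Eventually.of_forall (fun x => ?_)
      simp only [Set.indicator_apply, Set.mem_Iic]
      by_cases hx : x ≤ 0
      · rw [if_pos (mul_nonpos_of_nonneg_of_nonpos hδ.le hx), if_pos hx, abs_of_nonpos hx]
        ring_nf
      · push_neg at hx
        rw [if_neg (by simp [not_le.2 (mul_pos hδ hx)]), if_neg (by simp [not_le.2 hx])]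
    exact (integrable_indicator_iff measurableSet_Iic).1 (h.congr heq)
  rw [← integrableOn_univ, ← Set.Iic_union_Ioi (a := (0:ℝ))]
  exact h2.union h1

lemma aux_integrableOn_rpow_exp {a r : ℝ} (ha : -1 < a) (hr : 0 < r) :
    IntegrableOn (fun u : ℝ => u ^ a * Real.exp (-(r * u))) (Ioi 0) := by
  have := integrableOn_rpow_mul_exp_neg_mul_rpow ha zero_lt_one hr
  simpa [Real.rpow_one, neg_mul] using this
lemma aux_norm_eq {u : ℝ} (hu : 0 < u) (s c : ℂ) :
    ‖(u:ℂ) ^ (s-1) * Complex.exp (-(c * u))‖ = u ^ (s.re - 1) * Real.exp (-(c.re * u)) := by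
  rw [norm_mul,
    Complex.norm_cpow_eq_rpow_re_of_pos hu, Complex.norm_exp]
  simp [Complex.sub_re, Complex.mul_re]

lemma aux_contOn (s c : ℂ) :
    ContinuousOn (fun u : ℝ => (u:ℂ) ^ (s-1) * Complex.exp (-(c * u))) (Ioi 0) := by
  refine ContinuousOn.mul (fun u hu => ?_) (Continuous.continuousOn (by fun_prop))
  exact (Complex.continuousAt_ofReal_cpow_const u (s-1)
    (Or.inr (ne_of_gt hu))).continuousWithinAt

lemma aux_integrableOn_cpow_exp {s : ℂ} (hs : 0 < s.re) {c : ℂ} (hc : 0 < c.re) :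
    IntegrableOn (fun u : ℝ => (u:ℂ) ^ (s-1) * Complex.exp (-(c * u))) (Ioi 0) := by
  refine Integrable.mono' (aux_integrableOn_rpow_exp (a := s.re - 1) (by linarith) hc)
    ((aux_contOn s c).aestronglyMeasurable measurableSet_Ioi) ?_
  refine (ae_restrict_iff' measurableSet_Ioi).2 (Filter.Eventually.of_forall fun u hu => ?_)
  rw [aux_norm_eq hu s c]

lemma gamma_rotate {s : ℂ} (hs : 0 < s.re) {c : ℂ} (hc : 0 < c.re) :
    ∫ u : ℝ in Ioi 0, (u : ℂ) ^ (s - 1) * Complex.exp (-(c * u))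
      = c ^ (-s) * Complex.Gamma s := by
  set U : Set ℂ := {z : ℂ | 0 < z.re} with hUdef
  have hU : IsOpen U := isOpen_lt continuous_const continuous_re
  have hUpre : IsPreconnected U := (convex_halfSpace_re_gt 0).isPreconnected
  set H : ℂ → ℂ := fun c => ∫ u : ℝ in Ioi 0, (u : ℂ) ^ (s - 1) * Complex.exp (-(c * u))
    with hHdef
  set G : ℂ → ℂ := fun c => c ^ (-s) * Complex.Gamma s with hGdef
  have hHdiff : DifferentiableOn ℂ H U := by
    intro c₀ hc₀
    have hc₀' : 0 < c₀.re := hc₀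
    have key := hasDerivAt_integral_of_dominated_loc_of_deriv_le
      (F := fun (c : ℂ) (u : ℝ) => (u:ℂ) ^ (s-1) * Complex.exp (-(c * u)))
      (F' := fun (c : ℂ) (u : ℝ) => (u:ℂ) ^ (s-1) * (Complex.exp (-(c * u)) * -(u:ℂ)))
      (μ := volume.restrict (Ioi 0)) (x₀ := c₀)
      (bound := fun u : ℝ => u ^ s.re * Real.exp (-(c₀.re/2 * u)))
      (s := Metric.ball c₀ (c₀.re / 2)) (Metric.ball_mem_nhds _ (by positivity))
      (Filter.Eventually.of_forall fun c =>
        (aux_contOn s c).aestronglyMeasurable measurableSet_Ioi)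
      (aux_integrableOn_cpow_exp hs hc₀')
      ?_ ?_ ?_ ?_
    · exact key.2.differentiableAt.differentiableWithinAt
    · refine ContinuousOn.aestronglyMeasurable ?_ measurableSet_Ioi
      refine ContinuousOn.mul (fun u hu => (Complex.continuousAt_ofReal_cpow_const u (s-1)
        (Or.inr (ne_of_gt hu))).continuousWithinAt) (Continuous.continuousOn (by fun_prop))
    · refine (ae_restrict_iff' measurableSet_Ioi).2 (Filter.Eventually.of_forall fun u hu => ?_)
      intro c hcball
      have hre : c₀.re / 2 ≤ c.re := by
        have h1 : |(c - c₀).re| ≤ ‖c - c₀‖ := Complex.abs_re_le_norm _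
        have h2 : ‖c - c₀‖ < c₀.re / 2 := by
          simpa [Complex.dist_eq] using hcball
        have := (abs_le.1 (le_of_lt (lt_of_le_of_lt h1 h2))).1
        simp only [Complex.sub_re] at this
        linarith
      have hnorm : ‖(u:ℂ) ^ (s-1) * (Complex.exp (-(c * u)) * -(u:ℂ))‖
          = u ^ (s.re - 1) * (Real.exp (-(c.re * u)) * u) := by
        rw [norm_mul, norm_mul, norm_neg,
          Complex.norm_cpow_eq_rpow_re_of_pos hu, Complex.norm_exp,
          Complex.norm_real, Real.norm_eq_abs, abs_of_pos hu]
        simp [Complex.sub_re, Complex.mul_re]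
      rw [hnorm]
      have hupow : u ^ (s.re - 1) * (Real.exp (-(c.re * u)) * u)
          = u ^ s.re * Real.exp (-(c.re * u)) := by
        rw [show u ^ s.re = u ^ (s.re - 1 + 1) by norm_num,
          Real.rpow_add_one (ne_of_gt hu)]
        ring
      rw [hupow]
      have : Real.exp (-(c.re * u)) ≤ Real.exp (-(c₀.re / 2 * u)) := by
        apply Real.exp_le_exp.2
        have hmul := mul_le_mul_of_nonneg_right hre (le_of_lt (Set.mem_Ioi.1 hu))
        linarith
      exact mul_le_mul_of_nonneg_left this (Real.rpow_nonneg hu.le _)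
    · exact aux_integrableOn_rpow_exp (by linarith) (by positivity)
    · refine (ae_restrict_iff' measurableSet_Ioi).2 (Filter.Eventually.of_forall fun u hu => ?_)
      intro c hcball
      have h1 : HasDerivAt (fun c : ℂ => -(c * u)) (-(u:ℂ)) c :=
        (hasDerivAt_mul_const (u:ℂ)).neg
      exact (h1.cexp).const_mul _
  have hGdiff : DifferentiableOn ℂ G U := by
    intro c hcU
    exact ((differentiableAt_id.cpow (differentiableAt_const (-s))
      (Complex.mem_slitPlane_iff.2 (Or.inl hcU))).mul_const _).differentiableWithinAt
  have hreal : ∀ r : ℝ, 0 < r → H (r:ℂ) = G (r:ℂ) := by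
    intro r hr
    have h1 := Complex.integral_cpow_mul_exp_neg_mul_Ioi hs hr
    have h2 : ((1:ℂ) / r) ^ s = (r:ℂ) ^ (-s) := by
      rw [one_div, Complex.inv_cpow _ _ (by
        rw [Complex.arg_ofReal_of_nonneg hr.le]; exact Ne.symm Real.pi_ne_zero),
        ← Complex.cpow_neg]
    simp only [hHdef, hGdef]
    rw [h1, h2]
  have hfreq : ∃ᶠ z in nhdsWithin (1:ℂ) {(1:ℂ)}ᶜ, H z = G z := by
    have hseq : Filter.Tendsto (fun n : ℕ => ((1 + ((n:ℝ)+1)⁻¹ : ℝ) : ℂ)) Filter.atTop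
        (nhdsWithin (1:ℂ) {(1:ℂ)}ᶜ) := by
      rw [tendsto_nhdsWithin_iff]
      constructor
      · have h0 : Filter.Tendsto (fun n : ℕ => (1 + ((n:ℝ)+1)⁻¹ : ℝ)) Filter.atTop (nhds 1) := by
          have := tendsto_one_div_add_atTop_nhds_zero_nat (𝕜 := ℝ)
          simpa [one_div] using tendsto_const_nhds.add this
        have h2 := (Complex.continuous_ofReal.tendsto 1).comp h0
        rw [Complex.ofReal_one] at h2
        exact h2
      · refine Filter.Eventually.of_forall fun n => ?_
        simp only [Set.mem_compl_iff, Set.mem_singleton_iff]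
        intro h
        have : (1 + ((n:ℝ)+1)⁻¹ : ℝ) = 1 := by exact_mod_cast h
        have hpos : 0 < ((n:ℝ)+1)⁻¹ := by positivity
        linarith
    exact hseq.frequently (Filter.Frequently.of_forall fun n =>
      hreal _ (by positivity))
  have heq : Set.EqOn H G U :=
    (hHdiff.analyticOnNhd hU).eqOn_of_preconnected_of_frequently_eq
      (hGdiff.analyticOnNhd hU) hUpre (by simp [hUdef]) hfreq
  exact heq hc

lemma gamma_bound {σ' : ℝ} (hσ' : 0 < σ') {θ : ℝ} (hθ : 0 < θ) (hθ' : θ < π/2) (t : ℝ) :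
    ‖Complex.Gamma (σ' + t * Complex.I)‖ ≤
      Real.Gamma σ' * Real.cos θ ^ (-σ') * Real.exp (-θ * |t|) := by
  have hcospos : 0 < Real.cos θ :=
    Real.cos_pos_of_mem_Ioo ⟨by linarith [Real.pi_pos], hθ'⟩
  set θ₁ : ℝ := if 0 ≤ t then θ else -θ with hθ₁def
  have hcos : Real.cos θ₁ = Real.cos θ := by
    by_cases h : 0 ≤ t <;> simp [hθ₁def, h, Real.cos_neg]
  have hθ₁abs : -θ₁ * t = -θ * |t| := by
    by_cases h : 0 ≤ t
    · rw [hθ₁def, if_pos h, _root_.abs_of_nonneg h]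
    · push_neg at h
      rw [hθ₁def, if_neg (not_le.2 h), _root_.abs_of_neg h]; ring
  set c : ℂ := Complex.exp (θ₁ * Complex.I) with hcdef
  have hcre : c.re = Real.cos θ := by
    rw [hcdef, Complex.exp_ofReal_mul_I_re, hcos]
  have hcrepos : 0 < c.re := hcre ▸ hcospos
  set s : ℂ := σ' + t * Complex.I with hsdef
  have hsre : s.re = σ' := by simp [hsdef]
  have hrot := gamma_rotate (s := s) (by rw [hsre]; exact hσ') hcrepos
  have hcne : c ≠ 0 := Complex.exp_ne_zero _
  have hG : Complex.Gamma s = c ^ s * (c ^ (-s) * Complex.Gamma s) := by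
    rw [← mul_assoc, ← Complex.cpow_add _ _ hcne]
    simp
  have habs_cs : ‖c ^ s‖ = Real.exp (-θ * |t|) := by
    rw [Complex.cpow_def_of_ne_zero hcne, Complex.norm_exp]
    have hlog : Complex.log c = θ₁ * Complex.I := by
      rw [hcdef]
      apply Complex.log_exp
      · simp only [Complex.mul_im, Complex.ofReal_re, Complex.I_im, Complex.ofReal_im,
          Complex.I_re, mul_zero, mul_one, zero_mul, add_zero]
        by_cases h : 0 ≤ t <;> simp [hθ₁def, h] <;> linarith [Real.pi_gt_three]
      · simp only [Complex.mul_im, Complex.ofReal_re, Complex.I_im, Complex.ofReal_im,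
          Complex.I_re, mul_zero, mul_one, zero_mul, add_zero]
        by_cases h : 0 ≤ t <;> simp [hθ₁def, h] <;> linarith [Real.pi_gt_three]
    rw [hlog]
    congr 1
    rw [hsdef]
    simp only [Complex.mul_re, Complex.mul_im, Complex.add_re, Complex.add_im,
      Complex.ofReal_re, Complex.ofReal_im, Complex.I_re, Complex.I_im]
    rw [← hθ₁abs]; ring
  have hintle : ‖∫ u : ℝ in Ioi 0, (u:ℂ) ^ (s - 1) * Complex.exp (-(c * u))‖
      ≤ ∫ u : ℝ in Ioi 0, u ^ (σ' - 1) * Real.exp (-(Real.cos θ * u)) := by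
    refine norm_integral_le_of_norm_le (aux_integrableOn_rpow_exp (by linarith) hcospos) ?_
    refine (ae_restrict_iff' measurableSet_Ioi).2 (Filter.Eventually.of_forall fun u hu => ?_)
    rw [aux_norm_eq hu s c, hsre, hcre]
  have hval : ∫ u : ℝ in Ioi 0, u ^ (σ' - 1) * Real.exp (-(Real.cos θ * u))
      = Real.cos θ ^ (-σ') * Real.Gamma σ' := by
    rw [integral_rpow_mul_exp_neg_mul_Ioi hσ' hcospos, one_div,
      Real.inv_rpow hcospos.le, ← Real.rpow_neg hcospos.le]
  calc ‖Complex.Gamma s‖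
      = ‖c ^ s‖ * ‖c ^ (-s) * Complex.Gamma s‖ := by
        rw [← norm_mul, ← hG]
    _ ≤ Real.exp (-θ * |t|) * (Real.cos θ ^ (-σ') * Real.Gamma σ') := by
        rw [habs_cs, ← hrot]
        exact mul_le_mul_of_nonneg_left (le_trans hintle (le_of_eq hval))
          (Real.exp_nonneg _)
    _ = Real.Gamma σ' * Real.cos θ ^ (-σ') * Real.exp (-θ * |t|) := by ring

lemma vertical_shift {g : ℂ → ℂ} {a₁ a₂ : ℝ} (ha : a₁ ≤ a₂) {K δ : ℝ} (hδ : 0 < δ)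
    (hg : ∀ z : ℂ, a₁ ≤ z.re → z.re ≤ a₂ → DifferentiableAt ℂ g z)
    (hbd : ∀ (s t : ℝ), a₁ ≤ s → s ≤ a₂ →
      ‖g (s + t * Complex.I)‖ ≤ K * Real.exp (-δ * |t|)) :
    ∫ t : ℝ, g (a₁ + t * Complex.I) = ∫ t : ℝ, g (a₂ + t * Complex.I) := by
  have hK : 0 ≤ K := by
    have := hbd a₁ 0 le_rfl ha
    have h0 := norm_nonneg (g (a₁ + 0 * Complex.I))
    simpa using le_trans h0 this
  have hcont : ∀ s : ℝ, a₁ ≤ s → s ≤ a₂ → Continuous (fun t : ℝ => g (s + t * Complex.I)) := by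
    intro s h1 h2
    have hline : Continuous fun t : ℝ => (s : ℂ) + t * Complex.I := by fun_prop
    refine continuous_iff_continuousAt.2 fun t => ?_
    exact ((hg _ (by simp [h1]) (by simp [h2])).continuousAt).comp hline.continuousAt
  have hint : ∀ s : ℝ, a₁ ≤ s → s ≤ a₂ → Integrable (fun t : ℝ => g (s + t * Complex.I)) := by
    intro s h1 h2
    refine Integrable.mono' ((aux_integrable_exp_neg_mul_abs hδ).const_mul K)
      ((hcont s h1 h2).aestronglyMeasurable) ?_
    exact Filter.Eventually.of_forall fun t => hbd s t h1 h2
  have key : ∀ T : ℝ, 0 ≤ T →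
      ‖(∫ y in (-T)..T, g (a₂ + y * Complex.I)) - ∫ y in (-T)..T, g (a₁ + y * Complex.I)‖
        ≤ 2 * K * (a₂ - a₁) * Real.exp (-δ * T) := by
    intro T hT
    have hdOn : DifferentiableOn ℂ g
        (Set.uIcc ((a₁ : ℂ) - T * Complex.I).re ((a₂ : ℂ) + T * Complex.I).re ×ℂ
          Set.uIcc ((a₁ : ℂ) - T * Complex.I).im ((a₂ : ℂ) + T * Complex.I).im) := by
      intro p hp
      rw [Complex.mem_reProdIm] at hp
      have hp1 := hp.1
      simp only [Complex.sub_re, Complex.add_re, Complex.ofReal_re, Complex.mul_re,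
        Complex.I_re, Complex.ofReal_im, Complex.I_im] at hp1
      norm_num at hp1
      rw [Set.uIcc_of_le ha] at hp1
      exact (hg p hp1.1 hp1.2).differentiableWithinAt
    have h0 := Complex.integral_boundary_rect_eq_zero_of_differentiableOn g
      ((a₁ : ℂ) - T * Complex.I) ((a₂ : ℂ) + T * Complex.I) hdOn
    simp only [Complex.sub_re, Complex.add_re, Complex.ofReal_re, Complex.mul_re,
      Complex.I_re, Complex.ofReal_im, Complex.I_im, Complex.sub_im, Complex.add_im,
      Complex.mul_im] at h0
    norm_num at h0
    set V₁ := ∫ y in (-T)..T, g (a₁ + y * Complex.I) with hV1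
    set V₂ := ∫ y in (-T)..T, g (a₂ + y * Complex.I) with hV2
    set A := ∫ x in a₁..a₂, g (x + -(T * Complex.I)) with hA0
    set B := ∫ x in a₁..a₂, g (x + T * Complex.I) with hB0
    have hA : ‖A‖ ≤ K * Real.exp (-δ * T) * |a₂ - a₁| := by
      refine intervalIntegral.norm_integral_le_of_norm_le_const fun x hx => ?_
      rw [Set.uIoc_of_le ha] at hx
      have := hbd x (-T) (le_of_lt hx.1) hx.2
      rw [Complex.ofReal_neg, neg_mul, abs_neg, _root_.abs_of_nonneg hT] at this
      exact this
    have hB : ‖B‖ ≤ K * Real.exp (-δ * T) * |a₂ - a₁| := by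
      refine intervalIntegral.norm_integral_le_of_norm_le_const fun x hx => ?_
      rw [Set.uIoc_of_le ha] at hx
      have := hbd x T (le_of_lt hx.1) hx.2
      rw [_root_.abs_of_nonneg hT] at this
      exact this
    have habs : |a₂ - a₁| = a₂ - a₁ := _root_.abs_of_nonneg (by linarith)
    rw [habs] at hA hB
    calc ‖V₂ - V₁‖ = ‖Complex.I * (V₂ - V₁)‖ := by
          rw [norm_mul, Complex.norm_I, one_mul]
      _ = ‖B - A‖ := by rw [show Complex.I * (V₂ - V₁) = B - A by linear_combination h0]
      _ ≤ ‖B‖ + ‖A‖ := norm_sub_le _ _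
      _ ≤ 2 * K * (a₂ - a₁) * Real.exp (-δ * T) := by nlinarith [Real.exp_nonneg (-δ * T)]
  have htop : Filter.Tendsto (fun T : ℝ => 2 * K * (a₂ - a₁) * Real.exp (-δ * T))
      Filter.atTop (nhds 0) := by
    have h1 : Filter.Tendsto (fun T : ℝ => Real.exp (-(δ * T))) Filter.atTop (nhds 0) :=
      Real.tendsto_exp_neg_atTop_nhds_zero.comp (Filter.Tendsto.const_mul_atTop hδ Filter.tendsto_id)
    have h2 := h1.const_mul (2 * K * (a₂ - a₁))
    simp only [mul_zero] at h2
    simpa [neg_mul] using h2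
  have hV : ∀ s : ℝ, a₁ ≤ s → s ≤ a₂ →
      Filter.Tendsto (fun T : ℝ => ∫ y in (-T)..T, g (s + y * Complex.I)) Filter.atTop
        (nhds (∫ t : ℝ, g (s + t * Complex.I))) := fun s h1 h2 =>
    intervalIntegral_tendsto_integral (hint s h1 h2) Filter.tendsto_neg_atTop_atBot Filter.tendsto_id
  have hsub : Filter.Tendsto
      (fun T : ℝ => (∫ y in (-T)..T, g (a₂ + y * Complex.I)) -
        ∫ y in (-T)..T, g (a₁ + y * Complex.I)) Filter.atTop
      (nhds ((∫ t : ℝ, g (a₂ + t * Complex.I)) - ∫ t : ℝ, g (a₁ + t * Complex.I))) :=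
    (hV a₂ ha le_rfl).sub (hV a₁ le_rfl ha)
  have hzero : Filter.Tendsto
      (fun T : ℝ => (∫ y in (-T)..T, g (a₂ + y * Complex.I)) -
        ∫ y in (-T)..T, g (a₁ + y * Complex.I)) Filter.atTop (nhds 0) := by
    refine squeeze_zero_norm' ?_ htop
    filter_upwards [Filter.eventually_ge_atTop 0] with T hT
    exact key T hT
  exact (sub_eq_zero.1 (tendsto_nhds_unique hsub hzero)).symm

lemma aux_ne_neg_nat {z : ℂ} (hz : 0 < z.re) : ∀ m : ℕ, z ≠ -(m:ℂ) := by
  intro m h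
  rw [h] at hz
  simp only [Complex.neg_re, Complex.natCast_re] at hz
  have : (0:ℝ) ≤ m := Nat.cast_nonneg m
  linarith

lemma aux_cont_Gamma_line {s' : ℝ} (hs' : 0 < s') :
    Continuous (fun t : ℝ => Complex.Gamma (s' + t * Complex.I)) := by
  refine continuous_iff_continuousAt.2 fun t => ?_
  have hline : Continuous fun t : ℝ => (s' : ℂ) + t * Complex.I := by fun_prop
  exact ((Complex.differentiableAt_Gamma _ (aux_ne_neg_nat (by simpa using hs'))).continuousAt).comp
    hline.continuousAt

lemma aux_hasDerivAt_cpow {x : ℝ} (hx : 0 < x) (w : ℂ) :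
    HasDerivAt (fun x : ℝ => (x:ℂ) ^ w) ((x:ℂ) ^ w * ((x:ℂ)⁻¹ * w)) x := by
  have h1 : HasDerivAt Real.log x⁻¹ x := Real.hasDerivAt_log (ne_of_gt hx)
  have h2 := (h1.ofReal_comp).mul_const w
  have h3 := h2.cexp
  have heq : (fun x : ℝ => (x:ℂ) ^ w) =ᶠ[nhds x]
      (fun x : ℝ => Complex.exp ((Real.log x : ℂ) * w)) := by
    filter_upwards [eventually_gt_nhds hx] with y hy
    rw [Complex.cpow_def_of_ne_zero (by exact_mod_cast ne_of_gt hy),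
      Complex.ofReal_log hy.le]
  refine HasDerivAt.congr_of_eventuallyEq ?_ heq
  have hval : Complex.exp ((Real.log x : ℂ) * w) = (x:ℂ) ^ w := by
    rw [Complex.cpow_def_of_ne_zero (by exact_mod_cast ne_of_gt hx),
      Complex.ofReal_log hx.le]
  rw [hval, Complex.ofReal_inv] at h3
  exact h3

/-- The computation in the proof of Theorem 1 of the paper. With `φ`
holomorphic on the strip `0 < Re z < b` (`b > 1`), exponentially bounded of type
`α < π/2`, `σ ∈ (1,b)` and `f` the inverse Mellin transform of `Γ·φ` along `Re ξ = σ`,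
the function `f` is differentiable on `(0,∞)` and the inverse Mellin transform of
`Γ(ξ)(φ(ξ) - φ(ξ-1))` equals `f + f′`, the integral converging absolutely. -/
theorem stmt5 (b : ℝ) (hb : 1 < b) (α : ℝ) (hα0 : 0 ≤ α) (hα : α < π / 2)
    (C : ℝ) (hC : 0 < C) (φ : ℂ → ℂ)
    (hφ : DifferentiableOn ℂ φ {z : ℂ | 0 < z.re ∧ z.re < b})
    (hbound : ∀ z : ℂ, 0 < z.re → z.re < b →
      ‖φ z‖ ≤ C * Real.exp (α * |z.im|))
    (σ : ℝ) (hσ : σ ∈ Set.Ioo (1 : ℝ) b)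
    (f : ℝ → ℂ)
    (hf : ∀ x : ℝ, 0 < x →
      f x = (1 / (2 * (π : ℂ))) *
        ∫ t : ℝ, Complex.Gamma (σ + t * Complex.I) * φ (σ + t * Complex.I) *
          (x : ℂ) ^ (-((σ : ℂ) + t * Complex.I))) :
    ∃ f' : ℝ → ℂ,
      (∀ x : ℝ, 0 < x → HasDerivAt f (f' x) x) ∧
      (∀ x : ℝ, 0 < x →
        Integrable (fun t : ℝ => Complex.Gamma (σ + t * Complex.I) *
          (φ (σ + t * Complex.I) - φ (σ - 1 + t * Complex.I)) *
          (x : ℂ) ^ (-((σ : ℂ) + t * Complex.I)))) ∧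
      (∀ x : ℝ, 0 < x →
        (1 / (2 * (π : ℂ))) *
          (∫ t : ℝ, Complex.Gamma (σ + t * Complex.I) *
            (φ (σ + t * Complex.I) - φ (σ - 1 + t * Complex.I)) *
            (x : ℂ) ^ (-((σ : ℂ) + t * Complex.I))) = f x + f' x) := by
  obtain ⟨hσ1, hσb⟩ := hσ
  have hπ : 0 < π := Real.pi_pos
  set θ : ℝ := α / 2 + π / 4 with hθdef
  have hθpos : 0 < θ := by rw [hθdef]; linarith
  have hθlt : θ < π / 2 := by rw [hθdef]; linarith
  have hαθ : α < θ := by rw [hθdef]; linarith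
  set δ : ℝ := θ - α with hδdef
  have hδpos : 0 < δ := by rw [hδdef]; linarith
  have hσ0 : 0 < σ := by linarith
  have hcos : 0 < Real.cos θ := Real.cos_pos_of_mem_Ioo ⟨by linarith, hθlt⟩
  have hstrip : IsOpen {z : ℂ | 0 < z.re ∧ z.re < b} := by
    have heq : {z : ℂ | 0 < z.re ∧ z.re < b} = Complex.re ⁻¹' (Set.Ioo 0 b) := rfl
    rw [heq]; exact isOpen_Ioo.preimage Complex.continuous_re
  have hφdiff : ∀ z : ℂ, 0 < z.re → z.re < b → DifferentiableAt ℂ φ z := fun z h1 h2 =>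
    hφ.differentiableAt (hstrip.mem_nhds ⟨h1, h2⟩)
  have hφcont : ∀ s' : ℝ, 0 < s' → s' < b →
      Continuous (fun t : ℝ => φ ((s' : ℂ) + t * Complex.I)) := by
    intro s' h1 h2
    have hline : Continuous fun t : ℝ => (s' : ℂ) + t * Complex.I := by fun_prop
    refine continuous_iff_continuousAt.2 fun t => ?_
    exact ((hφdiff _ (by simpa using h1) (by simpa using h2)).continuousAt).comp
      hline.continuousAt
  have hφb : ∀ (s' t : ℝ), 0 < s' → s' < b →
      ‖φ ((s' : ℂ) + t * Complex.I)‖ ≤ C * Real.exp (α * |t|) := by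
    intro s' t h1 h2
    have := hbound ((s' : ℂ) + t * Complex.I) (by simpa using h1) (by simpa using h2)
    simpa using this
  have hexp : ∀ t : ℝ, Real.exp (-θ * |t|) * Real.exp (α * |t|) = Real.exp (-δ * |t|) := by
    intro t
    rw [← Real.exp_add]
    congr 1
    rw [hδdef]; ring
  -- bound for the product Γ((s'+1?)...) handled generically:
  have hprod : ∀ (s₁ s₂ : ℝ) (t x' : ℝ) (w : ℂ), 0 < s₁ → 0 < s₂ → s₂ < b → 0 < x' →
      ‖w‖ ≤ x' ^ (-s₁) →
      ‖Complex.Gamma ((s₁:ℂ) + t * Complex.I) * φ ((s₂:ℂ) + t * Complex.I) * w‖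
        ≤ (Real.Gamma s₁ * Real.cos θ ^ (-s₁) * C * x' ^ (-s₁)) * Real.exp (-δ * |t|) := by
    intro s₁ s₂ t x' w h1 h2 h3 hx' hw
    rw [norm_mul, norm_mul]
    have hg := gamma_bound h1 hθpos hθlt t
    have hp := hφb s₂ t h2 h3
    calc ‖Complex.Gamma ((s₁:ℂ) + t * Complex.I)‖ *
          ‖φ ((s₂:ℂ) + t * Complex.I)‖ * ‖w‖
        ≤ (Real.Gamma s₁ * Real.cos θ ^ (-s₁) * Real.exp (-θ * |t|)) *
          (C * Real.exp (α * |t|)) * x' ^ (-s₁) := by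
          refine mul_le_mul (mul_le_mul hg hp (norm_nonneg _) (by positivity))
            hw (norm_nonneg _) (by positivity)
      _ = (Real.Gamma s₁ * Real.cos θ ^ (-s₁) * C * x' ^ (-s₁)) *
          (Real.exp (-θ * |t|) * Real.exp (α * |t|)) := by ring
      _ = _ := by rw [hexp t]
  -- integrability of the basic integrand
  have hFint : ∀ x : ℝ, 0 < x → Integrable (fun t : ℝ =>
      Complex.Gamma (σ + t * Complex.I) * φ (σ + t * Complex.I) *
        (x : ℂ) ^ (-((σ : ℂ) + t * Complex.I))) := by
    intro x hx
    have hxne : (x : ℂ) ≠ 0 := by exact_mod_cast ne_of_gt hx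
    refine Integrable.mono' ((aux_integrable_exp_neg_mul_abs hδpos).const_mul
      (Real.Gamma σ * Real.cos θ ^ (-σ) * C * x ^ (-σ)))
      (Continuous.aestronglyMeasurable ?_) (Filter.Eventually.of_forall fun t => ?_)
    · exact ((aux_cont_Gamma_line hσ0).mul (hφcont σ hσ0 hσb)).mul
        ((Continuous.neg (by fun_prop)).const_cpow (Or.inl hxne))
    · refine hprod σ σ t x _ hσ0 hσ0 hσb hx ?_
      rw [Complex.norm_cpow_eq_rpow_re_of_pos hx]
      simp
  have hxine : ∀ t : ℝ, ((σ:ℂ) + t * Complex.I) ≠ 0 := by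
    intro t h
    apply_fun Complex.re at h
    simp at h
    linarith
  -- the derivative integrand and dominated differentiation
  have hDer : ∀ x : ℝ, 0 < x →
      Integrable (fun t : ℝ => Complex.Gamma (σ + t * Complex.I) * φ (σ + t * Complex.I) *
        ((x : ℂ) ^ (-((σ : ℂ) + t * Complex.I)) *
          ((x : ℂ)⁻¹ * (-((σ : ℂ) + t * Complex.I))))) ∧
      HasDerivAt (fun x : ℝ => ∫ t : ℝ, Complex.Gamma (σ + t * Complex.I) *
          φ (σ + t * Complex.I) * (x : ℂ) ^ (-((σ : ℂ) + t * Complex.I)))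
        (∫ t : ℝ, Complex.Gamma (σ + t * Complex.I) * φ (σ + t * Complex.I) *
          ((x : ℂ) ^ (-((σ : ℂ) + t * Complex.I)) *
            ((x : ℂ)⁻¹ * (-((σ : ℂ) + t * Complex.I))))) x := by
    intro x₀ hx₀
    have hball : ∀ x : ℝ, x ∈ Metric.ball x₀ (x₀ / 2) → x₀ / 2 < x := by
      intro x hxb
      rw [Metric.mem_ball, Real.dist_eq, abs_lt] at hxb
      linarith [hxb.1]
    have hξne : ∀ t : ℝ, ((σ:ℂ) + t * Complex.I) ≠ 0 := by
      intro t h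
      apply_fun Complex.re at h
      simp at h
      linarith
    have hkey : ∀ t : ℝ, ‖Complex.Gamma ((σ:ℂ) + t * Complex.I)‖ *
        ‖(σ:ℂ) + t * Complex.I‖
          = ‖Complex.Gamma (((σ+1:ℝ):ℂ) + t * Complex.I)‖ := by
      intro t
      rw [← norm_mul]
      have harg : (((σ+1:ℝ):ℂ) + t * Complex.I) = ((σ:ℂ) + t * Complex.I) + 1 := by
        push_cast; ring
      rw [harg, Complex.Gamma_add_one _ (hξne t), norm_mul, norm_mul]
      ring
    refine hasDerivAt_integral_of_dominated_loc_of_deriv_le (s := Metric.ball x₀ (x₀ / 2))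
      (F := fun (x : ℝ) (t : ℝ) => Complex.Gamma (σ + t * Complex.I) *
        φ (σ + t * Complex.I) * (x : ℂ) ^ (-((σ : ℂ) + t * Complex.I)))
      (F' := fun (x : ℝ) (t : ℝ) => Complex.Gamma (σ + t * Complex.I) *
        φ (σ + t * Complex.I) * ((x : ℂ) ^ (-((σ : ℂ) + t * Complex.I)) *
          ((x : ℂ)⁻¹ * (-((σ : ℂ) + t * Complex.I)))))
      (bound := fun t : ℝ => (Real.Gamma (σ+1) * Real.cos θ ^ (-(σ+1)) *
        (C * ((x₀/2) ^ (-σ) * (x₀/2)⁻¹))) * Real.exp (-δ * |t|))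
      (Metric.ball_mem_nhds _ (by positivity)) ?_ (hFint x₀ hx₀) ?_ ?_ ?_ ?_
    · filter_upwards [eventually_gt_nhds hx₀] with x hx
      have hxne : (x : ℂ) ≠ 0 := by exact_mod_cast ne_of_gt hx
      exact Continuous.aestronglyMeasurable (((aux_cont_Gamma_line hσ0).mul
        (hφcont σ hσ0 hσb)).mul
        ((Continuous.neg (by fun_prop)).const_cpow (Or.inl hxne)))
    · have hxne : (x₀ : ℂ) ≠ 0 := by exact_mod_cast ne_of_gt hx₀
      refine Continuous.aestronglyMeasurable (((aux_cont_Gamma_line hσ0).mul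
        (hφcont σ hσ0 hσb)).mul (Continuous.mul
          ((Continuous.neg (by fun_prop)).const_cpow (Or.inl hxne)) (by fun_prop)))
    · refine Filter.Eventually.of_forall fun t => ?_
      intro x hxb
      have hx : 0 < x := lt_trans (by positivity) (hball x hxb)
      have hxhalf : x₀ / 2 ≤ x := (hball x hxb).le
      have hnorm : ‖Complex.Gamma (σ + t * Complex.I) * φ (σ + t * Complex.I) *
          ((x : ℂ) ^ (-((σ : ℂ) + t * Complex.I)) *
            ((x : ℂ)⁻¹ * (-((σ : ℂ) + t * Complex.I))))‖
          = ‖Complex.Gamma ((σ:ℂ) + t * Complex.I)‖ *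
            ‖φ ((σ:ℂ) + t * Complex.I)‖ *
            (x ^ (-σ) * (x⁻¹ * ‖(σ:ℂ) + t * Complex.I‖)) := by
        rw [norm_mul, norm_mul, norm_mul, norm_mul, norm_neg,
          norm_inv, Complex.norm_real, Real.norm_eq_abs, _root_.abs_of_pos hx,
          Complex.norm_cpow_eq_rpow_re_of_pos hx]
        congr 3
        simp
      rw [hnorm]
      have hstep : ‖Complex.Gamma ((σ:ℂ) + t * Complex.I)‖ *
            ‖φ ((σ:ℂ) + t * Complex.I)‖ *
            (x ^ (-σ) * (x⁻¹ * ‖(σ:ℂ) + t * Complex.I‖))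
          = ‖Complex.Gamma (((σ+1:ℝ):ℂ) + t * Complex.I)‖ *
            ‖φ ((σ:ℂ) + t * Complex.I)‖ * (x ^ (-σ) * x⁻¹) := by
        rw [← hkey t]; ring
      rw [hstep]
      have h1 := gamma_bound (by linarith : (0:ℝ) < σ + 1) hθpos hθlt t
      have h2 := hφb σ t hσ0 hσb
      have h3 : x ^ (-σ) ≤ (x₀/2) ^ (-σ) :=
        Real.rpow_le_rpow_of_nonpos (by positivity) hxhalf (by linarith)
      have h4 : x⁻¹ ≤ (x₀/2)⁻¹ := by
        apply inv_anti₀ (by positivity) hxhalf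
      calc ‖Complex.Gamma (((σ+1:ℝ):ℂ) + t * Complex.I)‖ *
            ‖φ ((σ:ℂ) + t * Complex.I)‖ * (x ^ (-σ) * x⁻¹)
          ≤ (Real.Gamma (σ+1) * Real.cos θ ^ (-(σ+1)) * Real.exp (-θ * |t|)) *
            (C * Real.exp (α * |t|)) * ((x₀/2) ^ (-σ) * (x₀/2)⁻¹) := by
            refine mul_le_mul (mul_le_mul h1 h2 (norm_nonneg _) (by positivity))
              (mul_le_mul h3 h4 (by positivity) (by positivity))
              (by positivity) (by positivity)
        _ = (Real.Gamma (σ+1) * Real.cos θ ^ (-(σ+1)) * (C * ((x₀/2) ^ (-σ) * (x₀/2)⁻¹))) *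
            (Real.exp (-θ * |t|) * Real.exp (α * |t|)) := by ring
        _ = _ := by rw [hexp t]
    · exact (aux_integrable_exp_neg_mul_abs hδpos).const_mul _
    · refine Filter.Eventually.of_forall fun t => ?_
      intro x hxb
      have hx : 0 < x := lt_trans (by positivity) (hball x hxb)
      exact (aux_hasDerivAt_cpow hx (-((σ:ℂ) + t * Complex.I))).const_mul _
  -- contour shift and pointwise identities, for each fixed x
  have hmain : ∀ x : ℝ, 0 < x →
      Integrable (fun t : ℝ => Complex.Gamma (σ + t * Complex.I) *
        φ (↑σ - 1 + t * Complex.I) * (x : ℂ) ^ (-((σ : ℂ) + t * Complex.I))) ∧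
      (∫ t : ℝ, Complex.Gamma (σ + t * Complex.I) *
          φ (↑σ - 1 + t * Complex.I) * (x : ℂ) ^ (-((σ : ℂ) + t * Complex.I)))
        = -(∫ t : ℝ, Complex.Gamma (σ + t * Complex.I) * φ (σ + t * Complex.I) *
            ((x : ℂ) ^ (-((σ : ℂ) + t * Complex.I)) *
              ((x : ℂ)⁻¹ * (-((σ : ℂ) + t * Complex.I))))) := by
    intro x hx
    have hxne : (x : ℂ) ≠ 0 := by exact_mod_cast ne_of_gt hx
    have hcontΓ : ContinuousOn (fun s' : ℝ => Real.Gamma (s' + 1)) (Icc (σ-1) σ) := by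
      intro s' hs'
      have hpos : 0 < s' + 1 := by have := hs'.1; linarith
      have hne : ∀ m : ℕ, s' + 1 ≠ -(m:ℝ) := by
        intro m hm
        have : (0:ℝ) ≤ m := Nat.cast_nonneg m
        rw [hm] at hpos; linarith
      have hc1 : ContinuousAt Real.Gamma (s' + 1) :=
        (Real.differentiableAt_Gamma hne).continuousAt
      have hc2 : ContinuousAt (fun u : ℝ => u + 1) s' := by fun_prop
      exact (show ContinuousAt (Real.Gamma ∘ fun u : ℝ => u + 1) s' from ContinuousAt.comp (x := s') hc1 hc2).continuousWithinAt
    obtain ⟨MΓ, hMΓ⟩ := (isCompact_Icc (a := σ-1) (b := σ)).exists_bound_of_continuousOn hcontΓ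
    set Mx : ℝ := max (x ^ (-(σ+1))) (x ^ (-σ)) with hMxdef
    have hMxpos : 0 < Mx := lt_max_of_lt_left (by positivity)
    have hMΓ0 : 0 < MΓ := by
      have := hMΓ σ ⟨by linarith, le_rfl⟩
      have h2 : 0 < Real.Gamma (σ + 1) := Real.Gamma_pos_of_pos (by linarith)
      calc (0:ℝ) < Real.Gamma (σ+1) := h2
        _ ≤ ‖Real.Gamma (σ+1)‖ := le_abs_self _
        _ ≤ MΓ := this
    have hgdiff : ∀ z : ℂ, σ - 1 ≤ z.re → z.re ≤ σ →
        DifferentiableAt ℂ (fun z : ℂ => Complex.Gamma (z+1) * φ z *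
          (x : ℂ) ^ (-(z+1))) z := by
      intro z h1 h2
      have hz0 : 0 < z.re := by linarith
      have hΓ : DifferentiableAt ℂ (fun z : ℂ => Complex.Gamma (z+1)) z :=
        (Complex.differentiableAt_Gamma _ (aux_ne_neg_nat
          (by simp only [Complex.add_re, Complex.one_re]; linarith))).comp z
          (differentiableAt_id.add_const 1)
      have hφz : DifferentiableAt ℂ φ z := hφdiff z hz0 (by linarith)
      have hpow : DifferentiableAt ℂ (fun z : ℂ => (x : ℂ) ^ (-(z+1))) z :=
        ((differentiableAt_id.add_const 1).neg).const_cpow (Or.inl hxne)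
      exact (hΓ.mul hφz).mul hpow
    have hgbd : ∀ (s t : ℝ), σ - 1 ≤ s → s ≤ σ →
        ‖(fun z : ℂ => Complex.Gamma (z+1) * φ z * (x : ℂ) ^ (-(z+1)))
          ((s:ℂ) + t * Complex.I)‖
          ≤ (MΓ * Real.cos θ ^ (-(σ+1)) * C * Mx) * Real.exp (-δ * |t|) := by
      intro s t h1 h2
      simp only
      have e1 : ((s:ℂ) + t * Complex.I) + 1 = ((s+1:ℝ):ℂ) + t * Complex.I := by
        push_cast; ring
      have hw : ‖(x:ℂ) ^ (-(((s:ℂ) + t * Complex.I) + 1))‖ = x ^ (-(s+1)) := by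
        rw [Complex.norm_cpow_eq_rpow_re_of_pos hx]
        congr 1
        simp
      have hstep := hprod (s+1) s t x ((x:ℂ) ^ (-(((s:ℂ) + t * Complex.I) + 1)))
        (by linarith) (by linarith) (by linarith) hx (le_of_eq hw)
      rw [e1] at hstep ⊢
      refine le_trans hstep ?_
      have hb1 : Real.Gamma (s+1) ≤ MΓ :=
        le_trans (le_abs_self _) (hMΓ s ⟨h1, h2⟩)
      have hb2 : Real.cos θ ^ (-(s+1)) ≤ Real.cos θ ^ (-(σ+1)) :=
        Real.rpow_le_rpow_of_exponent_ge hcos (Real.cos_le_one θ) (by linarith)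
      have hb3 : x ^ (-(s+1)) ≤ Mx := by
        rcases le_total x 1 with hx1 | hx1
        · exact le_trans (Real.rpow_le_rpow_of_exponent_ge hx hx1 (by linarith))
            (le_max_left _ _)
        · exact le_trans (Real.rpow_le_rpow_of_exponent_le hx1 (by linarith))
            (le_max_right _ _)
      have hΓpos : 0 < Real.Gamma (s+1) := Real.Gamma_pos_of_pos (by linarith)
      refine mul_le_mul_of_nonneg_right ?_ (Real.exp_nonneg _)
      refine mul_le_mul (mul_le_mul (mul_le_mul hb1 hb2 (by positivity) hMΓ0.le)
        le_rfl hC.le (by positivity)) hb3 (by positivity) (by positivity)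
    have hvs := vertical_shift (g := fun z : ℂ => Complex.Gamma (z+1) * φ z *
        (x : ℂ) ^ (-(z+1))) (by linarith : σ - 1 ≤ σ) hδpos hgdiff hgbd
    have hI3eq : (fun t : ℝ => Complex.Gamma (σ + t * Complex.I) *
        φ (↑σ - 1 + t * Complex.I) * (x : ℂ) ^ (-((σ : ℂ) + t * Complex.I)))
        = fun t : ℝ => (fun z : ℂ => Complex.Gamma (z+1) * φ z * (x : ℂ) ^ (-(z+1)))
          (((σ-1:ℝ):ℂ) + t * Complex.I) := by
      funext t
      simp only
      have e1 : ((σ-1:ℝ):ℂ) + t * Complex.I + 1 = (σ:ℂ) + t * Complex.I := by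
        push_cast; ring
      have e2 : ((σ-1:ℝ):ℂ) + t * Complex.I = (σ:ℂ) - 1 + t * Complex.I := by
        push_cast; ring
      rw [e1, e2]
    have hI2eq : ∀ t : ℝ, (fun z : ℂ => Complex.Gamma (z+1) * φ z * (x : ℂ) ^ (-(z+1)))
        ((σ:ℂ) + t * Complex.I)
        = -(Complex.Gamma (σ + t * Complex.I) * φ (σ + t * Complex.I) *
            ((x : ℂ) ^ (-((σ : ℂ) + t * Complex.I)) *
              ((x : ℂ)⁻¹ * (-((σ : ℂ) + t * Complex.I))))) := by
      intro t
      simp only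
      rw [Complex.Gamma_add_one _ (hxine t),
        show -((σ:ℂ) + t * Complex.I + 1) = (-((σ:ℂ) + t * Complex.I)) + (-1) by ring,
        Complex.cpow_add _ _ hxne, Complex.cpow_neg_one]
      ring
    have hI3int : Integrable (fun t : ℝ => Complex.Gamma (σ + t * Complex.I) *
        φ (↑σ - 1 + t * Complex.I) * (x : ℂ) ^ (-((σ : ℂ) + t * Complex.I))) := by
      rw [hI3eq]
      refine Integrable.mono' ((aux_integrable_exp_neg_mul_abs hδpos).const_mul
        (MΓ * Real.cos θ ^ (-(σ+1)) * C * Mx))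
        (Continuous.aestronglyMeasurable ?_)
        (Filter.Eventually.of_forall fun t => hgbd (σ-1) t le_rfl (by linarith))
      have hline : Continuous fun t : ℝ => ((σ-1:ℝ):ℂ) + t * Complex.I := by fun_prop
      have hcφ : Continuous (fun t : ℝ => φ (((σ-1:ℝ):ℂ) + t * Complex.I)) := by
        refine continuous_iff_continuousAt.2 fun t => ?_
        exact ((hφdiff _ (by simp; linarith) (by simp; linarith)).continuousAt).comp
          hline.continuousAt
      have hcΓ : Continuous (fun t : ℝ => Complex.Gamma (((σ-1:ℝ):ℂ) + t * Complex.I + 1)) := by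
        refine continuous_iff_continuousAt.2 fun t => ?_
        refine ((Complex.differentiableAt_Gamma _ (aux_ne_neg_nat ?_)).continuousAt).comp
          (by fun_prop : Continuous fun t : ℝ =>
            ((σ-1:ℝ):ℂ) + t * Complex.I + 1).continuousAt
        simp only [Complex.add_re, Complex.one_re, Complex.ofReal_re, Complex.mul_re,
          Complex.I_re, Complex.I_im, Complex.ofReal_im]
        norm_num; linarith
      exact (hcΓ.mul hcφ).mul ((Continuous.neg (by fun_prop)).const_cpow (Or.inl hxne))
    refine ⟨hI3int, ?_⟩
    calc (∫ t : ℝ, Complex.Gamma (σ + t * Complex.I) *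
          φ (↑σ - 1 + t * Complex.I) * (x : ℂ) ^ (-((σ : ℂ) + t * Complex.I)))
        = ∫ t : ℝ, (fun z : ℂ => Complex.Gamma (z+1) * φ z * (x : ℂ) ^ (-(z+1)))
            (((σ-1:ℝ):ℂ) + t * Complex.I) := by rw [hI3eq]
      _ = ∫ t : ℝ, (fun z : ℂ => Complex.Gamma (z+1) * φ z * (x : ℂ) ^ (-(z+1)))
            ((σ:ℂ) + t * Complex.I) := hvs
      _ = ∫ t : ℝ, -(Complex.Gamma (σ + t * Complex.I) * φ (σ + t * Complex.I) *
            ((x : ℂ) ^ (-((σ : ℂ) + t * Complex.I)) *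
              ((x : ℂ)⁻¹ * (-((σ : ℂ) + t * Complex.I))))) := by
          refine integral_congr_ae (Filter.Eventually.of_forall fun t => hI2eq t)
      _ = -(∫ t : ℝ, Complex.Gamma (σ + t * Complex.I) * φ (σ + t * Complex.I) *
            ((x : ℂ) ^ (-((σ : ℂ) + t * Complex.I)) *
              ((x : ℂ)⁻¹ * (-((σ : ℂ) + t * Complex.I))))) := integral_neg _
  -- assemble
  refine ⟨fun x => (1 / (2 * (π:ℂ))) * ∫ t : ℝ, Complex.Gamma (σ + t * Complex.I) *
      φ (σ + t * Complex.I) * ((x : ℂ) ^ (-((σ : ℂ) + t * Complex.I)) *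
        ((x : ℂ)⁻¹ * (-((σ : ℂ) + t * Complex.I)))), ?_, ?_, ?_⟩
  · intro x hx
    have h1 := (hDer x hx).2
    have h2 := h1.const_mul (1 / (2 * (π:ℂ)))
    refine HasDerivAt.congr_of_eventuallyEq h2 ?_
    filter_upwards [eventually_gt_nhds hx] with y hy
    exact hf y hy
  · intro x hx
    have heq : (fun t : ℝ => Complex.Gamma (σ + t * Complex.I) *
        (φ (σ + t * Complex.I) - φ (σ - 1 + t * Complex.I)) *
        (x : ℂ) ^ (-((σ : ℂ) + t * Complex.I)))
        = fun t : ℝ => (Complex.Gamma (σ + t * Complex.I) * φ (σ + t * Complex.I) *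
            (x : ℂ) ^ (-((σ : ℂ) + t * Complex.I))) -
          (Complex.Gamma (σ + t * Complex.I) * φ (↑σ - 1 + t * Complex.I) *
            (x : ℂ) ^ (-((σ : ℂ) + t * Complex.I))) := by
      funext t; ring
    rw [heq]
    exact (hFint x hx).sub (hmain x hx).1
  · intro x hx
    have heq : (fun t : ℝ => Complex.Gamma (σ + t * Complex.I) *
        (φ (σ + t * Complex.I) - φ (σ - 1 + t * Complex.I)) *
        (x : ℂ) ^ (-((σ : ℂ) + t * Complex.I)))
        = fun t : ℝ => (Complex.Gamma (σ + t * Complex.I) * φ (σ + t * Complex.I) *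
            (x : ℂ) ^ (-((σ : ℂ) + t * Complex.I))) -
          (Complex.Gamma (σ + t * Complex.I) * φ (↑σ - 1 + t * Complex.I) *
            (x : ℂ) ^ (-((σ : ℂ) + t * Complex.I))) := by
      funext t; ring
    rw [heq, integral_sub (hFint x hx) (hmain x hx).1, (hmain x hx).2, hf x hx]
    ring
end

section
/- Let 0 ≤ α < π/2, ρ > 0 and C > 0. Let f be holomorphic on the right half-plane {Re z > 0} with |f(z)| ≤ C·exp(α·|Im z| + ρ·Re z) for all Re z > 0. Let S be holomorphic on {Re z > 0} with S(z + 1) = S(z) + f(z + 1) for all Re z > 0, and suppose there is M₀ > 0 such that |S(z)| ≤ M₀·exp(α·|Im z|) whenever 0 < Re z ≤ 1. Then there exists M > 0 such that |S(z)| ≤ M·(Re z + 2)·exp(α·|Im z| + ρ·Re z) for all Re z > 0. In particular, S again belongs to the space E. -/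
open Complex Real Set

/-- Theorem 2 of the paper. If `f` lies in the exponential space `E`
(holomorphic on the right half-plane with `|f(z)| ≤ C exp(α |Im z| + ρ Re z)`), `S` is an
indefinite sum of `f` on the right half-plane, and `S` is exponentially bounded of type
`α` on the strip `0 < Re z ≤ 1`, then `S` satisfies
`|S(z)| ≤ M (Re z + 2) exp(α |Im z| + ρ Re z)`, so in particular `S ∈ E`. -/
theorem stmt8 (α ρ C : ℝ) (hα0 : 0 ≤ α) (hα : α < π / 2) (hρ : 0 < ρ) (hC : 0 < C)
    (f : ℂ → ℂ)
    (hf : DifferentiableOn ℂ f {z : ℂ | 0 < z.re})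
    (hfb : ∀ z : ℂ, 0 < z.re →
      ‖f z‖ ≤ C * Real.exp (α * |z.im| + ρ * z.re))
    (S : ℂ → ℂ)
    (hS : DifferentiableOn ℂ S {z : ℂ | 0 < z.re})
    (hrec : ∀ z : ℂ, 0 < z.re → S (z + 1) = S z + f (z + 1))
    (M₀ : ℝ) (hM₀ : 0 < M₀)
    (hSb : ∀ z : ℂ, 0 < z.re → z.re ≤ 1 →
      ‖S z‖ ≤ M₀ * Real.exp (α * |z.im|)) :
    ∃ M : ℝ, 0 < M ∧ ∀ z : ℂ, 0 < z.re →
      ‖S z‖ ≤ M * (z.re + 2) * Real.exp (α * |z.im| + ρ * z.re) := by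
  -- Key lemma by induction on n
  have key : ∀ n : ℕ, ∀ w : ℂ, 0 < w.re → w.re ≤ 1 →
      ‖S (w + n)‖ ≤ (M₀ + n * C) *
        Real.exp (α * |w.im| + ρ * (w.re + n)) := by
    intro n
    induction n with
    | zero =>
      intro w hw0 hw1
      simp only [Nat.cast_zero, add_zero, zero_mul]
      calc ‖S w‖ ≤ M₀ * Real.exp (α * |w.im|) := hSb w hw0 hw1
        _ ≤ M₀ * Real.exp (α * |w.im| + ρ * w.re) := by
            exact mul_le_mul_of_nonneg_left
              (Real.exp_le_exp.2 (by nlinarith)) hM₀.le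
    | succ n ih =>
      intro w hw0 hw1
      have hwn : 0 < (w + (n : ℂ)).re := by
        simp only [Complex.add_re, Complex.natCast_re]
        positivity
      have heq : w + ((n : ℕ) + 1 : ℕ) = (w + n) + 1 := by push_cast; ring
      rw [heq, hrec _ hwn]
      have him : ((w + (n : ℂ)) + 1).im = w.im := by simp
      have hre : ((w + (n : ℂ)) + 1).re = w.re + n + 1 := by simp
      have hfbound : ‖f ((w + n) + 1)‖ ≤
          C * Real.exp (α * |w.im| + ρ * (w.re + (n + 1))) := by
        have := hfb ((w + (n : ℂ)) + 1) (by rw [hre]; positivity)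
        rw [him, hre] at this
        convert this using 3
        ring
      have hSbound : ‖S (w + n)‖ ≤
          (M₀ + n * C) * Real.exp (α * |w.im| + ρ * (w.re + (n + 1))) := by
        refine (ih w hw0 hw1).trans ?_
        have hMn : 0 ≤ M₀ + n * C := by positivity
        refine mul_le_mul_of_nonneg_left (Real.exp_le_exp.2 ?_) hMn
        nlinarith
      calc ‖S (w + n) + f ((w + n) + 1)‖
          ≤ ‖S (w + n)‖ + ‖f ((w + n) + 1)‖ :=
            norm_add_le _ _
        _ ≤ (M₀ + n * C) * Real.exp (α * |w.im| + ρ * (w.re + (n + 1)))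
            + C * Real.exp (α * |w.im| + ρ * (w.re + (n + 1))) :=
            add_le_add hSbound hfbound
        _ = (M₀ + (n + 1) * C) * Real.exp (α * |w.im| + ρ * (w.re + (n + 1))) := by
            ring
        _ = (M₀ + ((n : ℕ) + 1 : ℕ) * C) *
            Real.exp (α * |w.im| + ρ * (w.re + ((n : ℕ) + 1 : ℕ))) := by
            push_cast; ring
  refine ⟨M₀ + C, by positivity, fun z hz => ?_⟩
  set n : ℕ := ⌈z.re⌉₊ - 1 with hn
  have hceil1 : 1 ≤ ⌈z.re⌉₊ := Nat.one_le_ceil_iff.mpr hz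
  have hncast : (n : ℝ) = (⌈z.re⌉₊ : ℝ) - 1 := by
    rw [hn]; push_cast [hceil1]; ring
  have hnlt : (n : ℝ) < z.re := by
    rw [hncast]
    have := Nat.ceil_lt_add_one (le_of_lt hz)
    linarith
  have hnge : z.re ≤ (n : ℝ) + 1 := by
    rw [hncast]
    have := Nat.le_ceil z.re
    linarith
  set w : ℂ := z - n with hw
  have hwre : w.re = z.re - n := by simp [hw]
  have hwim : w.im = z.im := by simp [hw]
  have hw0 : 0 < w.re := by rw [hwre]; linarith
  have hw1 : w.re ≤ 1 := by rw [hwre]; linarith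
  have hz_eq : z = w + n := by rw [hw]; ring
  have hkey := key n w hw0 hw1
  rw [← hz_eq] at hkey
  rw [hwim, hwre] at hkey
  have hexp_eq : α * |z.im| + ρ * (z.re - n + n) = α * |z.im| + ρ * z.re := by ring
  rw [hexp_eq] at hkey
  refine hkey.trans ?_
  have hfac : M₀ + n * C ≤ (M₀ + C) * (z.re + 2) := by nlinarith
  exact mul_le_mul_of_nonneg_right hfac (Real.exp_pos _).le
end

section
/- Let f, S₁, S₂ be holomorphic on the open right half-plane {Re z > 0} and continuous on the closed right half-plane {Re z ≥ 0}, and suppose each of f, S₁, S₂ admits a bound of the form |·(z)| ≤ C·exp(α·|Im z| + ρ·Re z) on {Re z ≥ 0} for some constants C > 0, ρ > 0 and 0 ≤ α < π/2 (which may differ between the three functions). If S₁(z + 1) = S₁(z) + f(z + 1) and S₂(z + 1) = S₂(z) + f(z + 1) for all Re z > 0, and S₁(1) = S₂(1), then S₁(z) = S₂(z) for all z with Re z ≥ 0. That is, the indefinite sum of f within this growth class is unique once normalized at z = 1. -/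
open Complex Real Set Filter Bornology Topology

lemma sinpi_eq_zero_iff (z : ℂ) : Complex.sin ((π : ℂ) * z) = 0 ↔ ∃ n : ℤ, z = (n : ℂ) := by
  rw [Complex.sin_eq_zero_iff]
  constructor
  · rintro ⟨k, hk⟩
    refine ⟨k, ?_⟩
    have hπ : (π : ℂ) ≠ 0 := Complex.ofReal_ne_zero.mpr Real.pi_ne_zero
    have : (π : ℂ) * z = (π : ℂ) * (k : ℂ) := by rw [hk]; ring
    exact mul_left_cancel₀ hπ this
  · rintro ⟨n, rfl⟩
    exact ⟨n, by ring⟩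

lemma abs_sin_lower (w : ℂ) :
    (Real.exp |w.im| - Real.exp (-|w.im|)) / 2 ≤ ‖Complex.sin w‖ := by
  rw [show Complex.sin w = (Complex.exp (-w * I) - Complex.exp (w * I)) * I / 2 by rw [← Complex.two_sin]; ring]
  have h1 : ‖Complex.exp (-w * I)‖ = Real.exp w.im := by
    rw [Complex.norm_exp]; congr 1; simp
  have h2 : ‖Complex.exp (w * I)‖ = Real.exp (-w.im) := by
    rw [Complex.norm_exp]; congr 1; simp
  have key : Real.exp |w.im| - Real.exp (-|w.im|)
      ≤ ‖Complex.exp (-w * I) - Complex.exp (w * I)‖ := by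
    rcases le_total 0 w.im with ht | ht
    · have := norm_sub_norm_le (Complex.exp (-w * I)) (Complex.exp (w * I))
      rw [h1, h2] at this
      rw [_root_.abs_of_nonneg ht]
      linarith
    · have := norm_sub_norm_le (Complex.exp (w * I)) (Complex.exp (-w * I))
      rw [norm_sub_rev, h1, h2] at this
      rw [_root_.abs_of_nonpos ht, neg_neg]
      linarith
  calc (Real.exp |w.im| - Real.exp (-|w.im|)) / 2
      ≤ ‖Complex.exp (-w * I) - Complex.exp (w * I)‖ / 2 := by linarith
    _ = ‖(Complex.exp (-w * I) - Complex.exp (w * I)) * I / 2‖ := by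
        rw [norm_div, norm_mul, Complex.norm_I, mul_one, Complex.norm_two]

lemma entire_periodic_decay_eq_zero (F : ℂ → ℂ) (hF : Differentiable ℂ F)
    (hper : ∀ z, F (z + 1) = F z)
    (hzero : ∀ n : ℤ, F (n : ℂ) = 0)
    {C α : ℝ} (hα0 : 0 ≤ α) (hα : α < π)
    (hb : ∀ z : ℂ, ‖F z‖ ≤ C * Real.exp (α * |z.im|)) (z₀ : ℂ) :
    F z₀ = 0 := by
  have hC : 0 ≤ C := by
    have h := (norm_nonneg (F 0)).trans (hb 0)
    simpa using h
  set g : ℂ → ℂ := fun w => Complex.sin ((π : ℂ) * w) with hg_def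
  have hg : Differentiable ℂ g :=
    Complex.differentiable_sin.comp (differentiable_id.const_mul _)
  have hg_deriv : ∀ w, deriv g w = (π : ℂ) * Complex.cos ((π : ℂ) * w) := by
    intro w
    have h1 : HasDerivAt g (Complex.cos ((π : ℂ) * w) * (π : ℂ)) w := by
      have h0 := (Complex.hasDerivAt_sin ((π : ℂ) * w)).comp w
        ((hasDerivAt_id w).const_mul (π : ℂ))
      rw [mul_one] at h0
      exact h0
    rw [h1.deriv]; ring
  have hcos_ne : ∀ n : ℤ, (π : ℂ) * Complex.cos ((π : ℂ) * n) ≠ 0 := by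
    intro n
    have hπ : (π : ℂ) ≠ 0 := Complex.ofReal_ne_zero.mpr Real.pi_ne_zero
    refine mul_ne_zero hπ fun hc => ?_
    have hs : Complex.sin ((π : ℂ) * n) = 0 := (sinpi_eq_zero_iff _).2 ⟨n, rfl⟩
    have h2 := Complex.sin_sq_add_cos_sq ((π : ℂ) * n)
    rw [hs, hc] at h2; simp at h2
  set P : ℂ → ℂ := fun w =>
    if g w = 0 then deriv F w / ((π : ℂ) * Complex.cos ((π : ℂ) * w)) else F w / g w
    with hP_def
  have hgper : ∀ w, g (w + 1) = -g w := by
    intro w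
    have h : (π : ℂ) * (w + 1) = (π : ℂ) * w + (π : ℂ) := by ring
    show Complex.sin ((π : ℂ) * (w + 1)) = -Complex.sin ((π : ℂ) * w)
    rw [h, Complex.sin_add_pi]
  have hcosper : ∀ w, Complex.cos ((π : ℂ) * (w + 1)) = -Complex.cos ((π : ℂ) * w) := by
    intro w
    have h : (π : ℂ) * (w + 1) = (π : ℂ) * w + (π : ℂ) := by ring
    rw [h, Complex.cos_add_pi]
  have hFd_per : ∀ w, deriv F (w + 1) = deriv F w := by
    intro w
    have h : F = fun x => F (x + 1) := funext fun x => (hper x).symm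
    conv_rhs => rw [h]
    rw [deriv_comp_add_const]
  have hPper : ∀ w, P (w + 1) = -P w := by
    intro w
    by_cases hw : g w = 0
    · have hw1 : g (w + 1) = 0 := by rw [hgper w, hw, neg_zero]
      simp only [hP_def, if_pos hw, if_pos hw1]
      rw [hFd_per, hcosper, mul_neg, div_neg]
    · have hw1 : g (w + 1) ≠ 0 := by rw [hgper w]; exact neg_ne_zero.2 hw
      simp only [hP_def, if_neg hw, if_neg hw1]
      rw [hper, hgper, div_neg]
  -- isolatedness of zeros of g
  have hiso : ∀ n : ℤ, ∀ x ∈ Metric.ball ((n : ℤ) : ℂ) (1/2), x ≠ (n : ℂ) → g x ≠ 0 := by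
    intro n x hx hxn hgx
    obtain ⟨m, rfl⟩ := (sinpi_eq_zero_iff x).1 hgx
    have hd : ‖(m : ℂ) - (n : ℂ)‖ < 1/2 := by
      simpa [Complex.dist_eq] using hx
    have hmn : m ≠ n := fun h => hxn (by rw [h])
    have h1 : (1 : ℝ) ≤ ‖(m : ℂ) - (n : ℂ)‖ := by
      rw [← Int.cast_sub, Complex.norm_intCast]
      exact_mod_cast Int.one_le_abs (sub_ne_zero.2 hmn)
    linarith
  have hopen : IsOpen {x : ℂ | g x ≠ 0} := isOpen_ne.preimage hg.continuous
  have hPdiff_ne : ∀ w, g w ≠ 0 → DifferentiableAt ℂ P w := by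
    intro w hw
    have hmem : {x : ℂ | g x ≠ 0} ∈ nhds w := hopen.mem_nhds hw
    have heq : P =ᶠ[nhds w] fun x => F x / g x := by
      filter_upwards [hmem] with x hx
      exact if_neg hx
    exact ((hF.differentiableAt).div (hg.differentiableAt) hw).congr_of_eventuallyEq heq
  have hPdiff : Differentiable ℂ P := by
    intro w
    by_cases hw : g w = 0
    · obtain ⟨n, rfl⟩ := (sinpi_eq_zero_iff w).1 hw
      refine (Complex.analyticAt_of_differentiable_on_punctured_nhds_of_continuousAt ?_
        ?_).differentiableAt
      · have hmem : Metric.ball ((n : ℤ) : ℂ) (1/2) ∈ nhdsWithin ((n : ℤ) : ℂ) {((n : ℤ) : ℂ)}ᶜ :=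
          nhdsWithin_le_nhds (Metric.ball_mem_nhds _ (by norm_num))
        filter_upwards [hmem, self_mem_nhdsWithin] with x hx hx'
        exact hPdiff_ne x (hiso n x hx hx')
      · -- continuity at n via dslope
        have hr : ContinuousAt (fun x => dslope F (n : ℂ) x / dslope g (n : ℂ) x) ((n : ℤ) : ℂ) := by
          refine ContinuousAt.div ?_ ?_ ?_
          · exact continuousAt_dslope_same.2 hF.differentiableAt
          · exact continuousAt_dslope_same.2 hg.differentiableAt
          · rw [dslope_same, hg_deriv]
            exact hcos_ne n
        refine hr.congr ?_
        have hmem : Metric.ball ((n : ℤ) : ℂ) (1/2) ∈ nhds ((n : ℤ) : ℂ) :=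
          Metric.ball_mem_nhds _ (by norm_num)
        filter_upwards [hmem] with x hx
        by_cases hxn : x = (n : ℂ)
        · subst hxn
          rw [dslope_same, dslope_same, hg_deriv]
          exact (if_pos hw).symm
        · have hgx : g x ≠ 0 := hiso n x hx hxn
          have hxn' : x - ((n : ℤ) : ℂ) ≠ 0 := sub_ne_zero.2 hxn
          have hPx : P x = F x / g x := if_neg hgx
          rw [dslope_of_ne _ hxn, dslope_of_ne _ hxn, slope_def_field, slope_def_field,
            hzero n, show g ((n : ℤ) : ℂ) = 0 from hw, hPx, sub_zero, sub_zero]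
          field_simp
    · exact hPdiff_ne w hw
  -- zeros of g are real
  have hgne : ∀ w : ℂ, 1 ≤ |w.im| → g w ≠ 0 := by
    intro w hw hgw
    obtain ⟨n, rfl⟩ := (sinpi_eq_zero_iff w).1 hgw
    simp at hw
    linarith
  -- lower bound for |g| off the real axis
  have hπ4 : ∀ w : ℂ, 1 ≤ |w.im| → Real.exp (π * |w.im|) / 4 ≤ ‖g w‖ := by
    intro w hw
    have him : |((π : ℂ) * w).im| = π * |w.im| := by
      have : ((π : ℂ) * w).im = π * w.im := by simp [Complex.mul_im]
      rw [this, abs_mul, _root_.abs_of_pos Real.pi_pos]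
    have hlow := abs_sin_lower ((π : ℂ) * w)
    rw [him] at hlow
    set t := π * |w.im| with ht_def
    have ht : 1 ≤ t := by
      have := Real.pi_gt_three
      nlinarith
    have h1 : 1 + t ≤ Real.exp t := by linarith [Real.add_one_le_exp t]
    have h2 : Real.exp (-t) = 1 / Real.exp t := by rw [Real.exp_neg]; ring
    have h3 : 0 < Real.exp t := Real.exp_pos t
    have h4 : Real.exp t / 4 ≤ (Real.exp t - Real.exp (-t)) / 2 := by
      rw [h2]
      rw [div_le_div_iff₀ (by norm_num) (by norm_num)]
      have h5 : 2 ≤ Real.exp t := by linarith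
      have h6 : 1 / Real.exp t ≤ 1 / 2 := by
        rw [div_le_div_iff₀ h3 (by norm_num)]; linarith
      nlinarith
    exact le_trans h4 hlow
  -- decay bound for P off the real axis
  have hdecay : ∀ w : ℂ, 1 ≤ |w.im| →
      ‖P w‖ ≤ 4 * C * Real.exp ((α - π) * |w.im|) := by
    intro w hw
    have hgw := hgne w hw
    have hPw : P w = F w / g w := if_neg hgw
    set t := |w.im| with ht_def
    have heq : 4 * C * Real.exp ((α - π) * t) = C * Real.exp (α * t) / (Real.exp (π * t) / 4) := by
      rw [sub_mul, Real.exp_sub]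
      field_simp
    rw [hPw, norm_div, heq]
    exact div_le_div₀ (by positivity) (hb w) (by positivity) (hπ4 w hw)
  -- global bound
  have hexple : ∀ t : ℝ, 0 ≤ t → Real.exp ((α - π) * t) ≤ 1 := by
    intro t ht
    rw [Real.exp_le_one_iff]
    nlinarith
  obtain ⟨M, hM⟩ := (isCompact_closedBall (0 : ℂ) 2).exists_bound_of_continuousOn
    hPdiff.continuous.continuousOn
  have hPabs : Function.Periodic (fun x => ‖P x‖) 1 := by
    intro x
    simp only [hPper x, norm_neg]
  have hglob : ∀ w : ℂ, ‖P w‖ ≤ max (4 * C) M := by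
    intro w
    rcases le_total 1 |w.im| with hw | hw
    · refine le_trans (hdecay w hw) (le_trans ?_ (le_max_left _ _))
      calc 4 * C * Real.exp ((α - π) * |w.im|) ≤ 4 * C * 1 := by
            have := hexple |w.im| (abs_nonneg _)
            nlinarith
        _ = 4 * C := by ring
    · set n := ⌊w.re⌋ with hn_def
      set x := w - (n : ℂ) with hx_def
      have hxw : x + (n : ℤ) * (1 : ℂ) = w := by push_cast; ring
      have habs : ‖P w‖ = ‖P x‖ := by
        have h := (hPabs.int_mul n) x
        rw [hxw] at h
        exact h
      have hxre : x.re = w.re - n := by simp [hx_def]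
      have hxim : x.im = w.im := by simp [hx_def]
      have hmem : x ∈ Metric.closedBall (0 : ℂ) 2 := by
        rw [Metric.mem_closedBall, Complex.dist_eq, sub_zero]
        refine le_trans (Complex.norm_le_abs_re_add_abs_im x) ?_
        have h1 : |x.re| ≤ 1 := by
          rw [hxre, abs_le]
          constructor
          · linarith [Int.floor_le w.re]
          · linarith [Int.lt_floor_add_one w.re]
        have h2 : |x.im| ≤ 1 := by rw [hxim]; exact hw
        linarith
      rw [habs]
      exact le_trans (by simpa using hM x hmem) (le_max_right _ _)
  -- Liouville
  have hbdd : IsBounded (range P) := by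
    rw [isBounded_iff_forall_norm_le]
    exact ⟨max (4 * C) M, by rintro _ ⟨w, rfl⟩; simpa using hglob w⟩
  have hPzero : ∀ w : ℂ, P w = 0 := by
    intro w
    have hk : ∀ k : ℕ, ‖P w‖ ≤ 4 * C * Real.exp ((α - π) * (k + 1)) := by
      intro k
      have hPeq : P w = P (((k : ℝ) + 1) * I) := hPdiff.apply_eq_apply_of_bounded hbdd _ _
      have him : |((((k : ℝ) + 1)) * I : ℂ).im| = (k : ℝ) + 1 := by
        simp
        positivity
      have h1 : (1 : ℝ) ≤ |((((k : ℝ) + 1)) * I : ℂ).im| := by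
        rw [him]; simp [Nat.cast_nonneg]
      have := hdecay _ h1
      rw [him] at this
      rw [hPeq]
      exact this
    have hT : Tendsto (fun k : ℕ => 4 * C * Real.exp ((α - π) * (k + 1))) atTop (𝓝 0) := by
      have hr : Real.exp (α - π) < 1 := Real.exp_lt_one_iff.2 (by linarith)
      have hr0 : 0 ≤ Real.exp (α - π) := (Real.exp_pos _).le
      have h0 : Tendsto (fun k : ℕ => Real.exp (α - π) ^ k) atTop (𝓝 0) :=
        tendsto_pow_atTop_nhds_zero_of_lt_one hr0 hr
      have heq : ∀ k : ℕ, 4 * C * Real.exp ((α - π) * (k + 1))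
          = (4 * C * Real.exp (α - π)) * Real.exp (α - π) ^ k := by
        intro k
        rw [mul_add, mul_one, mul_comm (α - π) (k : ℝ), Real.exp_add, Real.exp_nat_mul]
        ring
      simp only [heq]
      simpa using h0.const_mul (4 * C * Real.exp (α - π))
    have hle : ‖P w‖ ≤ 0 := ge_of_tendsto' hT hk
    exact norm_eq_zero.1 (le_antisymm hle (norm_nonneg _))
  by_cases hz : g z₀ = 0
  · obtain ⟨n, rfl⟩ := (sinpi_eq_zero_iff z₀).1 hz
    exact hzero n
  · have := hPzero z₀
    have hPz : P z₀ = F z₀ / g z₀ := if_neg hz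
    rw [hPz] at this
    rcases div_eq_zero_iff.1 this with h | h
    · exact h
    · exact absurd h hz

/-- Uniqueness of the indefinite sum in the exponential space `E`. If
`f, S₁, S₂` are holomorphic on the open right half-plane, continuous on the closed one,
each bounded by `C exp(α |Im z| + ρ Re z)` with `α < π/2`, and `S₁, S₂` are both
indefinite sums of `f` with `S₁(1) = S₂(1)`, then `S₁ = S₂` on `Re z ≥ 0`. -/
theorem stmt9 (f S₁ S₂ : ℂ → ℂ)
    (hf : DifferentiableOn ℂ f {z : ℂ | 0 < z.re})
    (hfc : ContinuousOn f {z : ℂ | 0 ≤ z.re})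
    (hS₁ : DifferentiableOn ℂ S₁ {z : ℂ | 0 < z.re})
    (hS₁c : ContinuousOn S₁ {z : ℂ | 0 ≤ z.re})
    (hS₂ : DifferentiableOn ℂ S₂ {z : ℂ | 0 < z.re})
    (hS₂c : ContinuousOn S₂ {z : ℂ | 0 ≤ z.re})
    (hfb : ∃ C ρ α : ℝ, 0 < C ∧ 0 < ρ ∧ 0 ≤ α ∧ α < π / 2 ∧
      ∀ z : ℂ, 0 ≤ z.re → ‖f z‖ ≤ C * Real.exp (α * |z.im| + ρ * z.re))
    (hS₁b : ∃ C ρ α : ℝ, 0 < C ∧ 0 < ρ ∧ 0 ≤ α ∧ α < π / 2 ∧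
      ∀ z : ℂ, 0 ≤ z.re → ‖S₁ z‖ ≤ C * Real.exp (α * |z.im| + ρ * z.re))
    (hS₂b : ∃ C ρ α : ℝ, 0 < C ∧ 0 < ρ ∧ 0 ≤ α ∧ α < π / 2 ∧
      ∀ z : ℂ, 0 ≤ z.re → ‖S₂ z‖ ≤ C * Real.exp (α * |z.im| + ρ * z.re))
    (hrec₁ : ∀ z : ℂ, 0 < z.re → S₁ (z + 1) = S₁ z + f (z + 1))
    (hrec₂ : ∀ z : ℂ, 0 < z.re → S₂ (z + 1) = S₂ z + f (z + 1))
    (hnorm : S₁ 1 = S₂ 1) :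
    ∀ z : ℂ, 0 ≤ z.re → S₁ z = S₂ z := by
  obtain ⟨C₁, ρ₁, α₁, hC₁, hρ₁, hα₁0, hα₁, hb₁⟩ := hS₁b
  obtain ⟨C₂, ρ₂, α₂, hC₂, hρ₂, hα₂0, hα₂, hb₂⟩ := hS₂b
  set D : ℂ → ℂ := fun z => S₁ z - S₂ z with hD_def
  have hDdiff : DifferentiableOn ℂ D {z : ℂ | 0 < z.re} := hS₁.sub hS₂
  have hDc : ContinuousOn D {z : ℂ | 0 ≤ z.re} := hS₁c.sub hS₂c
  have hDrec : ∀ z : ℂ, 0 < z.re → D (z + 1) = D z := by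
    intro z hz
    simp only [hD_def]
    rw [hrec₁ z hz, hrec₂ z hz]; ring
  -- extend the recurrence to the boundary by continuity
  have hDrec' : ∀ z : ℂ, 0 ≤ z.re → D (z + 1) = D z := by
    intro z hz
    rcases lt_or_eq_of_le hz with h | h
    · exact hDrec z h
    · set u : ℕ → ℂ := fun k => z + ((1 / ((k : ℝ) + 1) : ℝ) : ℂ) with hu_def
      have hre : ∀ k, 0 < (u k).re := by
        intro k
        simp only [hu_def, Complex.add_re, Complex.ofReal_re]
        rw [← h]
        positivity
      have hu_tendsto : Tendsto u atTop (𝓝 z) := by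
        have h1 : Tendsto (fun k : ℕ => (1 / ((k : ℝ) + 1) : ℝ)) atTop (𝓝 0) :=
          tendsto_one_div_add_atTop_nhds_zero_nat
        have h2 : Tendsto (fun k : ℕ => ((1 / ((k : ℝ) + 1) : ℝ) : ℂ)) atTop (𝓝 ((0 : ℝ) : ℂ)) :=
          (Complex.continuous_ofReal.tendsto 0).comp h1
        have h3 := (tendsto_const_nhds (x := z) (f := (atTop : Filter ℕ))).add h2
        have h4 : z + ((0 : ℝ) : ℂ) = z := by simp
        rw [h4] at h3
        exact h3
      have hmem : ∀ k, u k ∈ {w : ℂ | 0 ≤ w.re} := fun k => le_of_lt (hre k)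
      have hu_in : Tendsto u atTop (𝓝[{w : ℂ | 0 ≤ w.re}] z) :=
        tendsto_nhdsWithin_of_tendsto_nhds_of_eventually_within u hu_tendsto
          (Eventually.of_forall hmem)
      have hu1_tendsto : Tendsto (fun k => u k + 1) atTop (𝓝 (z + 1)) := by
        simpa using hu_tendsto.add tendsto_const_nhds
      have hmem1 : ∀ k, u k + 1 ∈ {w : ℂ | 0 ≤ w.re} := by
        intro k
        have := hre k
        simp only [mem_setOf_eq, Complex.add_re, Complex.one_re]
        linarith
      have hu1_in : Tendsto (fun k => u k + 1) atTop (𝓝[{w : ℂ | 0 ≤ w.re}] (z + 1)) :=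
        tendsto_nhdsWithin_of_tendsto_nhds_of_eventually_within _ hu1_tendsto
          (Eventually.of_forall hmem1)
      have hz1 : (z + 1) ∈ {w : ℂ | 0 ≤ w.re} := by
        simp only [mem_setOf_eq, Complex.add_re, Complex.one_re]; linarith
      have hT1 : Tendsto (fun k => D (u k + 1)) atTop (𝓝 (D (z + 1))) :=
        (hDc (z + 1) hz1).tendsto.comp hu1_in
      have hT2 : Tendsto (fun k => D (u k)) atTop (𝓝 (D z)) :=
        (hDc z hz).tendsto.comp hu_in
      have heq : (fun k => D (u k + 1)) = fun k => D (u k) :=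
        funext fun k => hDrec (u k) (hre k)
      rw [heq] at hT1
      exact tendsto_nhds_unique hT1 hT2
  -- shifting by natural numbers
  have hDn : ∀ (k : ℕ) (w : ℂ), 0 ≤ w.re → D (w + k) = D w := by
    intro k
    induction k with
    | zero => intro w _; simp
    | succ m ih =>
      intro w hw
      have hcast : w + ((m + 1 : ℕ) : ℂ) = (w + (m : ℕ)) + 1 := by push_cast; ring
      have hwm : 0 ≤ (w + (m : ℕ)).re := by
        simp only [Complex.add_re, Complex.natCast_re]
        positivity
      rw [hcast, hDrec' _ hwm, ih w hw]
  have hDle : ∀ (w : ℂ) (a b : ℤ), a ≤ b → 0 ≤ w.re + a → D (w + b) = D (w + a) := by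
    intro w a b hab ha
    obtain ⟨k, hk⟩ : ∃ k : ℕ, b = a + k := ⟨(b - a).toNat, by omega⟩
    subst hk
    have hcast : w + ((a + (k : ℕ) : ℤ) : ℂ) = (w + a) + (k : ℕ) := by push_cast; ring
    have hre : 0 ≤ (w + (a : ℂ)).re := by
      simpa [Complex.add_re, Complex.intCast_re] using ha
    rw [hcast, hDn k (w + a) hre]
  -- the entire extension
  set F : ℂ → ℂ := fun z => D (z + ((-⌊z.re⌋ : ℤ) : ℂ)) with hF_def
  have hF_eq : ∀ (z : ℂ) (a : ℤ), 0 ≤ z.re + a → F z = D (z + a) := by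
    intro z a ha
    have h0 : 0 ≤ z.re + ((-⌊z.re⌋ : ℤ) : ℝ) := by
      push_cast
      linarith [Int.floor_le z.re]
    rcases le_total a (-⌊z.re⌋) with h | h
    · exact hDle z a _ h ha
    · exact (hDle z _ a h h0).symm
  have hopen : IsOpen {z : ℂ | 0 < z.re} := isOpen_lt continuous_const Complex.continuous_re
  have hF_diff : Differentiable ℂ F := by
    intro z₀
    set a : ℤ := -⌊z₀.re⌋ + 1 with ha_def
    have hsub : ∀ z ∈ Metric.ball z₀ 1, 0 < z.re + (a : ℝ) := by
      intro z hz
      have h1 : |(z - z₀).re| ≤ ‖z - z₀‖ := Complex.abs_re_le_norm _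
      have h2 : ‖z - z₀‖ < 1 := by
        rw [← Complex.dist_eq]; exact Metric.mem_ball.1 hz
      have h3 : z₀.re - z.re ≤ |(z - z₀).re| := by
        rw [Complex.sub_re, abs_sub_comm]
        exact le_abs_self _
      have := Int.floor_le z₀.re
      push_cast [ha_def]
      linarith
    have heq : Set.EqOn F (fun z => D (z + (a : ℂ))) (Metric.ball z₀ 1) := by
      intro z hz
      exact hF_eq z a (le_of_lt (hsub z hz))
    have hd : DifferentiableAt ℂ (fun z => D (z + (a : ℂ))) z₀ := by
      have hz₀ : (z₀ + (a : ℂ)) ∈ {z : ℂ | 0 < z.re} := by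
        have := hsub z₀ (Metric.mem_ball_self one_pos)
        simpa [Complex.add_re, Complex.intCast_re] using this
      have h1 : DifferentiableAt ℂ D (z₀ + (a : ℂ)) :=
        hDdiff.differentiableAt (hopen.mem_nhds hz₀)
      exact h1.comp z₀ (differentiableAt_id.add_const _)
    exact hd.congr_of_eventuallyEq
      (Filter.eventuallyEq_of_mem (Metric.ball_mem_nhds z₀ one_pos) heq)
  have hF_per : ∀ z, F (z + 1) = F z := by
    intro z
    have h0 : 0 ≤ z.re + ((-⌊z.re⌋ : ℤ) : ℝ) := by
      push_cast; linarith [Int.floor_le z.re]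
    have h1 : F z = D (z + ((-⌊z.re⌋ : ℤ) : ℂ)) := hF_eq z _ h0
    have h2 : F (z + 1) = D ((z + 1) + ((-⌊z.re⌋ - 1 : ℤ) : ℂ)) := by
      refine hF_eq (z + 1) _ ?_
      simp only [Complex.add_re, Complex.one_re]
      push_cast
      linarith [Int.floor_le z.re]
    rw [h1, h2]
    congr 1
    push_cast
    ring
  have hF_one : F 1 = 0 := by
    have h1 : F 1 = D (1 + ((0 : ℤ) : ℂ)) := hF_eq 1 0 (by norm_num [Complex.one_re])
    rw [h1]
    simp only [hD_def]
    rw [show (1 : ℂ) + ((0 : ℤ) : ℂ) = 1 by norm_num]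
    rw [hnorm]; ring
  have hF_zero : ∀ n : ℤ, F ((n : ℤ) : ℂ) = 0 := by
    intro n
    have hP : Function.Periodic F 1 := hF_per
    have h := (hP.int_mul (n - 1)) 1
    rw [mul_one] at h
    have hcast : (1 : ℂ) + ((n - 1 : ℤ) : ℂ) = (n : ℂ) := by push_cast; ring
    rw [hcast] at h
    rw [h, hF_one]
  -- the growth bound
  set α' := max α₁ α₂ with hα'_def
  set C' := (C₁ + C₂) * Real.exp (max ρ₁ ρ₂) with hC'_def
  have hF_bound : ∀ z : ℂ, ‖F z‖ ≤ C' * Real.exp (α' * |z.im|) := by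
    intro z
    set a : ℤ := -⌊z.re⌋ with ha_def
    have h0 : 0 ≤ z.re + (a : ℝ) := by
      push_cast [ha_def]; linarith [Int.floor_le z.re]
    have h1 : z.re + (a : ℝ) ≤ 1 := by
      push_cast [ha_def]; linarith [Int.lt_floor_add_one z.re]
    have hFz : F z = D (z + (a : ℂ)) := hF_eq z a h0
    set w := z + (a : ℂ) with hw_def
    have hwre : w.re = z.re + (a : ℝ) := by simp [hw_def, Complex.add_re, Complex.intCast_re]
    have hwim : w.im = z.im := by simp [hw_def, Complex.add_im, Complex.intCast_im]
    have hw0 : 0 ≤ w.re := by rw [hwre]; exact h0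
    have hbd : ∀ (Ci ρi αi : ℝ) (Si : ℂ → ℂ), 0 < Ci → 0 < ρi → 0 ≤ αi →
        (∀ x : ℂ, 0 ≤ x.re → ‖Si x‖ ≤ Ci * Real.exp (αi * |x.im| + ρi * x.re)) →
        ρi ≤ max ρ₁ ρ₂ → αi ≤ α' →
        ‖Si w‖ ≤ Ci * Real.exp (α' * |z.im| + max ρ₁ ρ₂) := by
      intro Ci ρi αi Si hCi hρi hαi hbi hρle hαle
      refine le_trans (hbi w hw0) ?_
      have hexp : αi * |w.im| + ρi * w.re ≤ α' * |z.im| + max ρ₁ ρ₂ := by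
        rw [hwim, hwre]
        have e1 : αi * |z.im| ≤ α' * |z.im| := by
          apply mul_le_mul_of_nonneg_right hαle (abs_nonneg _)
        have e2 : ρi * (z.re + (a : ℝ)) ≤ max ρ₁ ρ₂ := by
          calc ρi * (z.re + (a : ℝ)) ≤ ρi * 1 := by
                apply mul_le_mul_of_nonneg_left h1 (le_of_lt hρi)
            _ = ρi := mul_one _
            _ ≤ max ρ₁ ρ₂ := hρle
        linarith
      exact mul_le_mul_of_nonneg_left (Real.exp_le_exp.2 hexp) (le_of_lt hCi)
    have hD_abs : ‖D w‖ ≤ ‖S₁ w‖ + ‖S₂ w‖ := by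
      simp only [hD_def]
      simpa using norm_sub_le (S₁ w) (S₂ w)
    have hS1w := hbd C₁ ρ₁ α₁ S₁ hC₁ hρ₁ hα₁0 hb₁ (le_max_left _ _) (le_max_left _ _)
    have hS2w := hbd C₂ ρ₂ α₂ S₂ hC₂ hρ₂ hα₂0 hb₂ (le_max_right _ _) (le_max_right _ _)
    rw [hFz]
    calc ‖D w‖ ≤ ‖S₁ w‖ + ‖S₂ w‖ := hD_abs
      _ ≤ (C₁ + C₂) * Real.exp (α' * |z.im| + max ρ₁ ρ₂) := by linarith
      _ = C' * Real.exp (α' * |z.im|) := by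
          rw [hC'_def, Real.exp_add]; ring
  have hα'0 : 0 ≤ α' := le_trans hα₁0 (le_max_left _ _)
  have hα'π : α' < π := by
    have hπ : π / 2 < π := by linarith [Real.pi_pos]
    exact max_lt (lt_trans hα₁ hπ) (lt_trans hα₂ hπ)
  have hFzero := entire_periodic_decay_eq_zero F hF_diff hF_per hF_zero hα'0 hα'π hF_bound
  intro z hz
  have h1 : F z = D (z + ((0 : ℤ) : ℂ)) := hF_eq z 0 (by simpa using hz)
  have h2 : D z = 0 := by
    have := hFzero z
    rw [h1] at this
    simpa using this
  exact sub_eq_zero.1 h2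
end

section
/- Let f be holomorphic on the open right half-plane {Re z > 0} and continuous on the closed right half-plane {Re z ≥ 0}, and suppose there exist constants C > 0, ρ > 0 and 0 ≤ α < π/2 such that |f(z)| ≤ C·exp(α·|Im z| + ρ·Re z) for all Re z ≥ 0. If f(n) = 0 for every integer n ≥ 1, then f(z) = 0 for all z with Re z ≥ 0. -/
open Complex Real Set Filter Asymptotics Topology Bornology

lemma sin_xy (x y : ℝ) : Complex.sin ((x:ℂ) + (y:ℂ) * Complex.I) =
    (Real.sin x * Real.cosh y : ℝ) + (Real.cos x * Real.sinh y : ℝ) * Complex.I := by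
  rw [Complex.sin_add, Complex.sin_mul_I, Complex.cos_mul_I]
  push_cast [← Complex.ofReal_sin, ← Complex.ofReal_cos, ← Complex.ofReal_sinh,
    ← Complex.ofReal_cosh]
  ring

lemma abs_sin_ge_sin_re (w : ℂ) : |Real.sin w.re| ≤ ‖Complex.sin w‖ := by
  have h : Complex.sin w = (Real.sin w.re * Real.cosh w.im : ℝ) +
      (Real.cos w.re * Real.sinh w.im : ℝ) * Complex.I := by
    conv_lhs => rw [← Complex.re_add_im w]
    exact sin_xy w.re w.im
  have hre : (Complex.sin w).re = Real.sin w.re * Real.cosh w.im := by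
    rw [h]
    simp only [Complex.add_re, Complex.ofReal_re, Complex.mul_re, Complex.I_re,
      Complex.I_im, Complex.ofReal_im]
    ring
  calc |Real.sin w.re| = |Real.sin w.re| * 1 := (mul_one _).symm
    _ ≤ |Real.sin w.re| * Real.cosh w.im := by
        have := Real.one_le_cosh w.im
        nlinarith [abs_nonneg (Real.sin w.re)]
    _ = |Real.sin w.re * Real.cosh w.im| := by
        rw [abs_mul, abs_of_pos (Real.cosh_pos (x := w.im))]
    _ = |(Complex.sin w).re| := by rw [hre]
    _ ≤ ‖Complex.sin w‖ := Complex.abs_re_le_norm _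

lemma abs_sin_ge_exp (w : ℂ) (hw : Real.pi ≤ |w.im|) :
    Real.exp |w.im| / 4 ≤ ‖Complex.sin w‖ := by
  have habs : ‖Complex.sin w‖ =
      ‖Complex.exp (-w * Complex.I) - Complex.exp (w * Complex.I)‖ / 2 := by
    rw [Complex.sin]
    simp [norm_div, norm_mul]
  have e1 : ‖Complex.exp (-w * Complex.I)‖ = Real.exp w.im := by
    rw [Complex.norm_exp]; congr 1; simp
  have e2 : ‖Complex.exp (w * Complex.I)‖ = Real.exp (-w.im) := by
    rw [Complex.norm_exp]; congr 1; simp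
  have tri : ∀ a b : ℂ, ‖a‖ - ‖b‖ ≤ ‖a - b‖ := by
    intro a b
    simpa using norm_sub_norm_le a b
  have key : Real.exp |w.im| - Real.exp (-|w.im|) ≤
      ‖Complex.exp (-w * Complex.I) - Complex.exp (w * Complex.I)‖ := by
    rcases abs_cases w.im with ⟨h1, _⟩ | ⟨h1, _⟩
    · have := tri (Complex.exp (-w * Complex.I)) (Complex.exp (w * Complex.I))
      rw [e1, e2] at this
      rw [h1]
      linarith
    · have := tri (Complex.exp (w * Complex.I)) (Complex.exp (-w * Complex.I))
      rw [e1, e2] at this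
      have hneg : ‖Complex.exp (w * Complex.I) - Complex.exp (-w * Complex.I)‖ =
          ‖Complex.exp (-w * Complex.I) - Complex.exp (w * Complex.I)‖ := by
        rw [← norm_neg]; congr 1; ring
      rw [hneg] at this
      rw [h1]
      have hr : - -w.im = w.im := by ring
      rw [hr]
      linarith
  have hE1 : (1:ℝ) ≤ Real.exp |w.im| := Real.one_le_exp (abs_nonneg _)
  have hsmall : Real.exp (-|w.im|) ≤ 1/2 := by
    have h1 : Real.exp (-|w.im|) ≤ Real.exp (-1) := by
      apply Real.exp_le_exp.2
      have := Real.pi_gt_three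
      linarith
    have h2 : Real.exp (-1) ≤ 1/2 := by
      rw [Real.exp_neg]
      have h3 : (2:ℝ) ≤ Real.exp 1 := by
        have := Real.add_one_le_exp 1
        linarith
      have h4 := Real.exp_pos 1
      rw [inv_le_comm₀ h4 (by norm_num : (0:ℝ) < 1/2)]
      norm_num
      linarith
    linarith
  rw [habs]
  linarith

noncomputable def Sx : ℂ → ℂ := fun z => Complex.sin ((Real.pi : ℂ) * z)

lemma Sx_diff : Differentiable ℂ Sx :=
  Complex.differentiable_sin.comp (differentiable_id.const_mul _)

lemma Sx_eq_zero_iff {z : ℂ} : Sx z = 0 ↔ ∃ k : ℤ, z = (k : ℂ) := by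
  rw [Sx, Complex.sin_eq_zero_iff]
  constructor
  · rintro ⟨k, hk⟩
    refine ⟨k, ?_⟩
    have hπ : (Real.pi : ℂ) ≠ 0 := Complex.ofReal_ne_zero.2 Real.pi_ne_zero
    rw [mul_comm] at hk
    exact mul_right_cancel₀ hπ hk
  · rintro ⟨k, rfl⟩
    exact ⟨k, by ring⟩

lemma Sx_hasDerivAt (z : ℂ) :
    HasDerivAt Sx (Complex.cos ((Real.pi : ℂ) * z) * (Real.pi : ℂ)) z := by
  have h1 : HasDerivAt (fun w : ℂ => (Real.pi : ℂ) * w) ((Real.pi : ℂ)) z := by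
    simpa using (hasDerivAt_id z).const_mul (Real.pi : ℂ)
  exact (Complex.hasDerivAt_sin _).comp z h1

lemma Sx_deriv_ne (z : ℂ) (hz : Sx z = 0) : deriv Sx z ≠ 0 := by
  rw [(Sx_hasDerivAt z).deriv]
  have h1 := Complex.sin_sq_add_cos_sq ((Real.pi : ℂ) * z)
  rw [show Complex.sin ((Real.pi:ℂ)*z) = 0 from hz] at h1
  simp only [ne_eq, mul_eq_zero, not_or]
  constructor
  · intro h; rw [h] at h1; simp at h1
  · exact Complex.ofReal_ne_zero.2 Real.pi_ne_zero

open scoped Classical in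
noncomputable def gg (F : ℂ → ℂ) : ℂ → ℂ := fun z =>
  if Sx z = 0 then deriv F z / deriv Sx z else F z / Sx z

lemma gg_diff {F : ℂ → ℂ} (hF : DifferentiableOn ℂ F {z | -1 < z.re})
    (hFz : ∀ z : ℂ, -1 < z.re → Sx z = 0 → F z = 0) :
    DifferentiableOn ℂ (gg F) {z | -1 < z.re} := by
  have Uopen : IsOpen {z : ℂ | -1 < z.re} := isOpen_lt continuous_const Complex.continuous_re
  intro z₀ hz₀
  suffices h : DifferentiableAt ℂ (gg F) z₀ from h.differentiableWithinAt
  have hFd : DifferentiableAt ℂ F z₀ := hF.differentiableAt (Uopen.mem_nhds hz₀)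
  by_cases h0 : Sx z₀ = 0
  · -- removable singularity
    have hFa : AnalyticAt ℂ F z₀ := hF.analyticAt (Uopen.mem_nhds hz₀)
    have hSa : AnalyticAt ℂ Sx z₀ :=
      (Sx_diff.differentiableOn (s := Set.univ)).analyticAt univ_mem
    obtain ⟨p, hp⟩ := hFa
    obtain ⟨q, hq⟩ := hSa
    have ana₁ : AnalyticAt ℂ (dslope F z₀) z₀ := ⟨_, hp.has_fpower_series_dslope_fslope⟩
    have ana₂ : AnalyticAt ℂ (dslope Sx z₀) z₀ := ⟨_, hq.has_fpower_series_dslope_fslope⟩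
    have hne : dslope Sx z₀ z₀ ≠ 0 := by
      rw [dslope_same]
      exact Sx_deriv_ne z₀ h0
    have hdiv : DifferentiableAt ℂ (fun w => dslope F z₀ w / dslope Sx z₀ w) z₀ :=
      (ana₁.div ana₂ hne).differentiableAt
    have hev : gg F =ᶠ[𝓝 z₀] fun w => dslope F z₀ w / dslope Sx z₀ w := by
      obtain ⟨k₀, hk₀⟩ := Sx_eq_zero_iff.1 h0
      filter_upwards [Metric.ball_mem_nhds z₀ one_pos] with w hw
      rcases eq_or_ne w z₀ with rfl | hwne
      · rw [gg, if_pos h0, dslope_same, dslope_same]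
      · have hSw : Sx w ≠ 0 := by
          intro hSw
          obtain ⟨k, hk⟩ := Sx_eq_zero_iff.1 hSw
          have : k ≠ k₀ := by
            intro h; apply hwne; rw [hk, h, ← hk₀]
          have h1 : (1:ℝ) ≤ ‖w - z₀‖ := by
            rw [hk, hk₀, ← Int.cast_sub, Complex.norm_intCast]
            exact_mod_cast Int.one_le_abs (sub_ne_zero.2 this)
          rw [Metric.mem_ball, Complex.dist_eq] at hw
          linarith
        rw [gg, if_neg hSw, dslope_of_ne _ hwne, dslope_of_ne _ hwne,
          slope_def_field, slope_def_field, hFz z₀ hz₀ h0, h0]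
        have hwz : w - z₀ ≠ 0 := sub_ne_zero.2 hwne
        field_simp
        ring
    exact hdiv.congr_of_eventuallyEq hev
  · have hSd : DifferentiableAt ℂ Sx z₀ := Sx_diff z₀
    have hdiv : DifferentiableAt ℂ (fun w => F w / Sx w) z₀ := hFd.div hSd h0
    have hev : gg F =ᶠ[𝓝 z₀] fun w => F w / Sx w := by
      have hopen : IsOpen {w : ℂ | Sx w ≠ 0} := isOpen_ne_fun Sx_diff.continuous continuous_const
      filter_upwards [hopen.mem_nhds h0] with w hw
      rw [gg, if_neg hw]
    exact hdiv.congr_of_eventuallyEq hev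

lemma lemA (h : ℂ → ℂ) (K δ B b : ℝ) (hδ : 0 < δ) (hb : 0 ≤ b) (hB : 0 ≤ B)
    (hd : DiffContOnCl ℂ h {z : ℂ | 0 < z.re})
    (hgrow : ∀ z : ℂ, 0 ≤ z.re → ‖h z‖ ≤ B * Real.exp (b * ‖z‖))
    (hre : ∀ x : ℝ, 0 ≤ x → ‖h x‖ ≤ K)
    (him : ∀ y : ℝ, ‖h (y * Complex.I)‖ ≤ K * Real.exp (-δ * |y|)) :
    ∀ z : ℂ, 0 ≤ z.re → ‖h z‖ ≤ K * Real.exp (-δ * |z.im|) := by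
  have hK : 0 ≤ K := le_trans (norm_nonneg _) ((him 0).trans (by simp))
  have main : ∀ ε : ℝ, |ε| = 1 → ∀ z : ℂ, 0 ≤ z.re → 0 ≤ ε * z.im →
      ‖h z‖ ≤ K * Real.exp (-δ * (ε * z.im)) := by
    intro ε hε z hz him0
    set v : ℂ → ℂ := fun w => Complex.exp (-(δ:ℂ) * (ε:ℂ) * Complex.I * w) * h w with hv
    have hvabs : ∀ w : ℂ, ‖v w‖ = ‖h w‖ * Real.exp (δ * (ε * w.im)) := by
      intro w
      rw [hv]
      simp only [norm_mul, Complex.norm_exp]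
      rw [mul_comm]
      congr 1
      have : (-(δ:ℂ) * (ε:ℂ) * Complex.I * w).re = δ * (ε * w.im) := by
        simp [Complex.mul_re, Complex.mul_im]
        ring
      rw [this]
    have hvd : DiffContOnCl ℂ v {z : ℂ | 0 < z.re} := by
      have h1 : Differentiable ℂ (fun w : ℂ => Complex.exp (-(δ:ℂ) * (ε:ℂ) * Complex.I * w)) :=
        (differentiable_id.const_mul _).cexp
      exact h1.diffContOnCl.smul hd
    have hexp : ∀ (Q : Set ℂ), Q ⊆ {z : ℂ | 0 < z.re} → ∃ c < (2:ℝ), ∃ B',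
        v =O[Bornology.cobounded ℂ ⊓ 𝓟 Q] fun w => Real.exp (B' * ‖w‖ ^ (c:ℝ)) := by
      intro Q hQ
      refine ⟨1, one_lt_two, b + δ, ?_⟩
      rw [Asymptotics.isBigO_iff]
      refine ⟨B, ?_⟩
      rw [Filter.eventually_inf_principal]
      filter_upwards with w hw
      have hw1 : (0:ℝ) < w.re := hQ hw
      rw [hvabs, Real.rpow_one, Real.norm_eq_abs,
        abs_of_pos (Real.exp_pos _)]
      have h1 : ‖h w‖ ≤ B * Real.exp (b * ‖w‖) := hgrow w hw1.le
      have h2 : Real.exp (δ * (ε * w.im)) ≤ Real.exp (δ * ‖w‖) := by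
        apply Real.exp_le_exp.2
        have h3 : ε * w.im ≤ |ε * w.im| := le_abs_self _
        rw [abs_mul, hε, one_mul] at h3
        have h4 := Complex.abs_im_le_norm w
        nlinarith [le_abs_self w.im, abs_nonneg w.im]
      calc ‖h w‖ * Real.exp (δ * (ε * w.im))
          ≤ (B * Real.exp (b * ‖w‖)) * Real.exp (δ * ‖w‖) := by
            apply mul_le_mul h1 h2 (Real.exp_pos _).le (by positivity)
        _ = B * Real.exp ((b + δ) * ‖w‖) := by
            rw [mul_assoc, ← Real.exp_add]; ring_nf
    have hre' : ∀ x : ℝ, 0 ≤ x → ‖v x‖ ≤ K := by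
      intro x hx
      rw [hvabs]
      simpa using hre x hx
    have himK : ∀ y : ℝ, ‖v ((y:ℂ) * Complex.I)‖ ≤ K := by
      intro y
      rw [hvabs]
      have h5 : ((y:ℂ) * Complex.I).im = y := by simp
      rw [h5]
      have h6 : ε * y ≤ |y| := by
        calc ε * y ≤ |ε * y| := le_abs_self _
          _ = |y| := by rw [abs_mul, hε, one_mul]
      calc ‖h ((y:ℂ) * Complex.I)‖ * Real.exp (δ * (ε * y))
          ≤ (K * Real.exp (-δ * |y|)) * Real.exp (δ * (ε * y)) := by
            apply mul_le_mul (him y) le_rfl (Real.exp_pos _).le (by positivity)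
        _ = K * Real.exp (-δ * |y| + δ * (ε * y)) := by rw [mul_assoc, ← Real.exp_add]
        _ ≤ K * Real.exp 0 := by
            have h7 : -δ * |y| + δ * (ε * y) ≤ 0 := by nlinarith
            have := Real.exp_le_exp.2 h7
            nlinarith [Real.exp_pos (-δ * |y| + δ * (ε * y))]
        _ = K := by rw [Real.exp_zero, mul_one]
    have final : ‖v z‖ ≤ K := by
      rcases le_or_gt 0 ε with hε0 | hε0
      · have hε1 : ε = 1 := by rcases abs_cases ε with ⟨h1,_⟩|⟨h1,_⟩ <;> linarith
        refine PhragmenLindelof.quadrant_I (hvd.mono fun w hw => (mem_reProdIm.1 hw).1)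
          (hexp _ (fun w hw => (mem_reProdIm.1 hw).1)) hre' (fun y _ => himK y) hz ?_
        rw [hε1, one_mul] at him0; exact him0
      · have hε1 : ε = -1 := by rcases abs_cases ε with ⟨h1,_⟩|⟨h1,_⟩ <;> linarith
        refine PhragmenLindelof.quadrant_IV (hvd.mono fun w hw => (mem_reProdIm.1 hw).1)
          (hexp _ (fun w hw => (mem_reProdIm.1 hw).1)) hre' (fun y _ => himK y) hz ?_
        rw [hε1] at him0; linarith
    rw [hvabs] at final
    rw [← le_div_iff₀ (Real.exp_pos _)] at final
    calc ‖h z‖ ≤ K / Real.exp (δ * (ε * z.im)) := final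
      _ = K * Real.exp (-δ * (ε * z.im)) := by
          rw [div_eq_mul_inv, ← Real.exp_neg]; ring_nf
  intro z hz
  rcases le_total 0 z.im with h0 | h0
  · have := main 1 (by norm_num) z hz (by linarith)
    rw [_root_.abs_of_nonneg h0]
    simpa using this
  · have := main (-1) (by norm_num) z hz (by linarith)
    rw [abs_of_nonpos h0]
    simpa using this

lemma lemB (h : ℂ → ℂ) (K δ : ℝ) (hδ : 0 < δ) (hK : 0 ≤ K)
    (hd : DiffContOnCl ℂ h {z : ℂ | 0 < z.re})
    (hP : ∀ z : ℂ, 0 ≤ z.re → ‖h z‖ ≤ K * Real.exp (-δ * |z.im|)) :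
    ∀ x : ℝ, 0 ≤ x → ‖h x‖ * Real.exp (δ * x) ≤ K := by
  intro x hx
  set s : ℝ := Real.sqrt 2 / 2 with hs
  have hs0 : 0 < s := by rw [hs]; positivity
  have hs2 : s * s = 1/2 := by
    rw [hs]; rw [div_mul_div_comm, Real.mul_self_sqrt (by norm_num)]; norm_num
  set r : ℂ := (s:ℂ) - (s:ℂ) * Complex.I with hr
  have hrre : r.re = s := by simp [hr]
  have hrim : r.im = -s := by simp [hr]
  set H : ℂ → ℂ := fun w => Complex.exp ((δ:ℂ) * w) • h w with hH
  have hHabs : ∀ w : ℂ, ‖H w‖ = ‖h w‖ * Real.exp (δ * w.re) := by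
    intro w
    rw [hH]
    simp only [smul_eq_mul, norm_mul, Complex.norm_exp]
    rw [mul_comm]
    congr 2
    simp [Complex.mul_re]
  have hHd : DiffContOnCl ℂ H {z : ℂ | 0 < z.re} :=
    ((differentiable_id.const_mul _).cexp.diffContOnCl).smul hd
  set u : ℂ → ℂ := fun w => H (r * w) with hu
  have hmul_re : ∀ w : ℂ, (r * w).re = s * (w.re + w.im) := by
    intro w; rw [Complex.mul_re, hrre, hrim]; ring
  have hmul_im : ∀ w : ℂ, (r * w).im = s * (w.im - w.re) := by
    intro w; rw [Complex.mul_im, hrre, hrim]; ring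
  have huabs : ∀ w : ℂ, 0 ≤ w.re → 0 ≤ w.im → ‖u w‖ ≤
      K * Real.exp (δ * s * (w.re + w.im) - δ * s * |w.im - w.re|) := by
    intro w h1 h2
    rw [hu, hHabs, hmul_re]
    have h3 : (0:ℝ) ≤ (r*w).re := by rw [hmul_re]; positivity
    have h4 := hP (r * w) h3
    rw [hmul_im] at h4
    calc ‖h (r*w)‖ * Real.exp (δ * (s * (w.re + w.im)))
        ≤ (K * Real.exp (-δ * |s * (w.im - w.re)|)) * Real.exp (δ * (s * (w.re + w.im))) := by
          apply mul_le_mul h4 le_rfl (Real.exp_pos _).le (by positivity)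
      _ = K * Real.exp (δ * s * (w.re + w.im) - δ * s * |w.im - w.re|) := by
          rw [mul_assoc, ← Real.exp_add]
          congr 2
          rw [abs_mul, _root_.abs_of_pos hs0]
          ring
  have hud : DiffContOnCl ℂ u (Ioi 0 ×ℂ Ioi 0) := by
    constructor
    · intro w hw
      rw [mem_reProdIm] at hw
      have h1 : (0:ℝ) < (r * w).re := by
        rw [hmul_re]
        have := hw.1; have := hw.2
        simp only [mem_Ioi] at *
        nlinarith
      have h2 : DifferentiableAt ℂ H (r * w) :=
        hHd.differentiableOn.differentiableAt
          ((isOpen_lt continuous_const Complex.continuous_re).mem_nhds h1)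
      exact (h2.comp w ((differentiableAt_id.const_mul r))).differentiableWithinAt
    · rw [closure_reProdIm, closure_Ioi]
      have hHc : ContinuousOn H {z : ℂ | 0 ≤ z.re} := by
        have := hHd.continuousOn
        rwa [closure_setOf_lt_re] at this
      apply hHc.comp (continuous_const.mul continuous_id).continuousOn
      intro w hw
      rw [mem_reProdIm] at hw
      simp only [mem_Ici] at hw
      show (0:ℝ) ≤ (r * w).re
      rw [hmul_re]
      have := hw.1; have := hw.2
      positivity
  have key : ‖u ((s*x:ℝ) + (s*x:ℝ) * Complex.I)‖ ≤ K := by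
    apply PhragmenLindelof.quadrant_I hud ?_ ?_ ?_ (by simp; exact mul_nonneg hs0.le hx)
      (by simp; exact mul_nonneg hs0.le hx)
    · refine ⟨1, one_lt_two, δ, ?_⟩
      rw [Asymptotics.isBigO_iff]
      refine ⟨K, ?_⟩
      rw [Filter.eventually_inf_principal]
      filter_upwards with w hw
      rw [mem_reProdIm] at hw
      have h1 : (0:ℝ) ≤ w.re := (le_of_lt hw.1)
      have h2 : (0:ℝ) ≤ w.im := (le_of_lt hw.2)
      rw [Real.rpow_one, Real.norm_eq_abs, _root_.abs_of_pos (Real.exp_pos _)]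
      calc ‖u w‖ ≤
          K * Real.exp (δ * s * (w.re + w.im) - δ * s * |w.im - w.re|) := huabs w h1 h2
        _ ≤ K * Real.exp (δ * ‖w‖) := by
            apply mul_le_mul le_rfl (Real.exp_le_exp.2 ?_) (Real.exp_pos _).le hK
            have habs_r : ‖r‖ = 1 := by
              rw [Complex.norm_def, Complex.normSq_apply, hrre, hrim]
              rw [show s * s + -s * -s = (1:ℝ) by nlinarith]
              exact Real.sqrt_one
            have h9 : s * (w.re + w.im) ≤ ‖w‖ := by
              rw [← hmul_re]
              calc (r*w).re ≤ ‖r*w‖ := Complex.re_le_norm _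
                _ = ‖w‖ := by rw [norm_mul, habs_r, one_mul]
            have h5 := abs_nonneg (w.im - w.re)
            nlinarith [mul_le_mul_of_nonneg_left h9 hδ.le,
              mul_nonneg (mul_nonneg hδ.le hs0.le) h5]
    · intro t ht
      have h1 := huabs t (by simp [ht]) (by simp)
      simp only [Complex.ofReal_re, Complex.ofReal_im, add_zero, zero_sub, abs_neg,
        _root_.abs_of_nonneg ht, sub_self] at h1
      calc ‖u t‖ ≤ K * Real.exp (δ * s * (t + 0) - δ * s * t) := by
            simpa using h1
        _ = K := by rw [add_zero, sub_self, Real.exp_zero, mul_one]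
    · intro t ht
      have h1 := huabs ((t:ℂ) * Complex.I) (by simp) (by simp [ht])
      simp only [Complex.mul_re, Complex.mul_im, Complex.ofReal_re, Complex.ofReal_im,
        Complex.I_re, Complex.I_im, mul_zero, mul_one, zero_mul, sub_zero, zero_add,
        zero_sub, _root_.abs_of_nonneg ht] at h1
      calc ‖u ((t:ℂ) * Complex.I)‖ ≤ K * Real.exp (δ * s * (0 + t) - δ * s * |t - 0|) := by
            simpa using h1
        _ = K := by rw [zero_add, sub_zero, _root_.abs_of_nonneg ht, sub_self, Real.exp_zero, mul_one]
  -- now translate key back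
  have hwre : ((s*x:ℝ) + (s*x:ℝ) * Complex.I).re = s * x := by simp
  have hwim : ((s*x:ℝ) + (s*x:ℝ) * Complex.I).im = s * x := by simp
  have hrw : r * ((s*x:ℝ) + (s*x:ℝ) * Complex.I) = (x:ℂ) := by
    apply Complex.ext
    · rw [hmul_re, hwre, hwim, Complex.ofReal_re]
      linear_combination (2*x) * hs2
    · rw [hmul_im, hwre, hwim, Complex.ofReal_im]
      ring
  have key2 : ‖H (r * ((s*x:ℝ) + (s*x:ℝ) * Complex.I))‖ ≤ K := by
    simpa [hu] using key
  rw [hrw, hHabs, Complex.ofReal_re] at key2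
  exact key2


section lemC
variable (F : ℂ → ℂ) (C α : ℝ)

-- (a)
lemma lemCa (hC : 0 < C) (hα0 : 0 ≤ α) (hα : α ≤ Real.pi)
    (hFb : ∀ z : ℂ, -1 ≤ z.re → ‖F z‖ ≤ C * Real.exp (α * |z.im|)) :
    ∀ z : ℂ, -1 ≤ z.re → 1 ≤ |z.im| →
      ‖gg F z‖ ≤ 4 * C * Real.exp ((α - Real.pi) * |z.im|) := by
  intro z hre him
  have hz0 : Sx z ≠ 0 := by
    rw [Ne, Sx_eq_zero_iff]
    rintro ⟨k, rfl⟩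
    simp only [Complex.intCast_im] at him
    norm_num at him
  rw [gg, if_neg hz0, norm_div]
  have hS : Real.exp (Real.pi * |z.im|) / 4 ≤ ‖Sx z‖ := by
    have h1 : Real.pi ≤ |((Real.pi : ℂ) * z).im| := by
      have : ((Real.pi : ℂ) * z).im = Real.pi * z.im := by
        simp [Complex.mul_im]
      rw [this, abs_mul, abs_of_pos Real.pi_pos]
      nlinarith [Real.pi_pos]
    have := abs_sin_ge_exp ((Real.pi : ℂ) * z) h1
    have h2 : |((Real.pi : ℂ) * z).im| = Real.pi * |z.im| := by
      simp [Complex.mul_im, abs_mul, abs_of_pos Real.pi_pos]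
    rwa [h2] at this
  have hF := hFb z hre
  have hSpos : (0:ℝ) < Real.exp (Real.pi * |z.im|) / 4 := by positivity
  calc ‖F z‖ / ‖Sx z‖
      ≤ (C * Real.exp (α * |z.im|)) / (Real.exp (Real.pi * |z.im|) / 4) :=
        div_le_div₀ (by positivity) hF hSpos hS
    _ = 4 * C * Real.exp ((α - Real.pi) * |z.im|) := by
        rw [sub_mul, Real.exp_sub]
        field_simp


lemma lemCb (hC : 0 < C) (hα0 : 0 ≤ α) (hα : α ≤ Real.pi / 2)
    (hFb : ∀ z : ℂ, -1 ≤ z.re → ‖F z‖ ≤ C * Real.exp (α * |z.im|)) :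
    ∀ z : ℂ, (z.re = -(4:ℝ)⁻¹ ∨ ∃ m : ℕ, z.re = m + 1/2) → |z.im| ≤ 1 →
      ‖gg F z‖ ≤ 2 * C * Real.exp (Real.pi / 2) := by
  intro z hre him
  have hre1 : (-1:ℝ) ≤ z.re := by
    rcases hre with h | ⟨m, h⟩ <;> rw [h]
    · norm_num
    · have : (0:ℝ) ≤ (m:ℝ) := Nat.cast_nonneg m
      linarith
  have hz0 : Sx z ≠ 0 := by
    rw [Ne, Sx_eq_zero_iff]
    rintro ⟨k, rfl⟩
    simp only [Complex.intCast_re] at hre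
    rcases hre with h | ⟨m, h⟩
    · have h4 : (4 * k : ℝ) = -1 := by rw [h]; norm_num
      have h5 : (4 * k : ℤ) = -1 := by exact_mod_cast h4
      omega
    · have h4 : (2 * k : ℝ) = 2 * m + 1 := by rw [h]; ring
      have h5 : (2 * k : ℤ) = 2 * m + 1 := by exact_mod_cast h4
      omega
  have hSre : ((Real.pi : ℂ) * z).re = Real.pi * z.re := by simp [Complex.mul_re]
  have hS : (1/2 : ℝ) ≤ ‖Sx z‖ := by
    have h1 := abs_sin_ge_sin_re ((Real.pi : ℂ) * z)
    rw [hSre] at h1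
    refine le_trans ?_ h1
    rcases hre with h | ⟨m, h⟩
    · rw [h]
      have : Real.pi * -(4:ℝ)⁻¹ = -(Real.pi/4) := by ring
      rw [this, Real.sin_neg, abs_neg, Real.sin_pi_div_four]
      rw [_root_.abs_of_nonneg (by positivity)]
      nlinarith [Real.sq_sqrt (by norm_num : (0:ℝ) ≤ 2), Real.sqrt_nonneg 2]
    · rw [h]
      have h2 : Real.pi * ((m:ℝ) + 1/2) = (m:ℝ) * Real.pi + Real.pi/2 := by ring
      rw [h2, Real.sin_add_pi_div_two]
      have h3 : Real.sin ((m:ℝ) * Real.pi) = 0 := by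
        have := Real.sin_int_mul_pi (m : ℤ)
        simpa using this
      have h4 := Real.sin_sq_add_cos_sq ((m:ℝ) * Real.pi)
      rw [h3] at h4
      have h5 : |Real.cos ((m:ℝ) * Real.pi)| = 1 := by
        rw [← Real.sqrt_sq_eq_abs]
        rw [show Real.cos ((m:ℝ)*Real.pi)^2 = 1 by nlinarith]
        exact Real.sqrt_one
      rw [h5]; norm_num
  have hF : ‖F z‖ ≤ C * Real.exp (Real.pi/2) := by
    refine (hFb z hre1).trans ?_
    have : α * |z.im| ≤ Real.pi/2 := by nlinarith [abs_nonneg z.im]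
    have := Real.exp_le_exp.2 this
    nlinarith
  rw [gg, if_neg hz0, norm_div]
  calc ‖F z‖ / ‖Sx z‖
      ≤ (C * Real.exp (Real.pi/2)) / (1/2 : ℝ) :=
        div_le_div₀ (by positivity) hF (by norm_num) hS
    _ = 2 * C * Real.exp (Real.pi/2) := by ring



lemma lemCd (hC : 0 < C) (hα0 : 0 ≤ α) (hα : α ≤ Real.pi / 2)
    (hFd : DifferentiableOn ℂ F {z | -1 < z.re})
    (hFz : ∀ z : ℂ, -1 < z.re → Sx z = 0 → F z = 0)
    (hFb : ∀ z : ℂ, -1 ≤ z.re → ‖F z‖ ≤ C * Real.exp (α * |z.im|)) :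
    ∀ z : ℂ, 0 ≤ z.re → ‖gg F z‖ ≤ 2 * C * Real.exp (Real.pi / 2) := by
  have hαπ : α ≤ Real.pi := le_trans hα (by linarith [Real.pi_pos])
  have h42 : 4 * C ≤ 2 * C * Real.exp (Real.pi / 2) := by
    have h1 : (2:ℝ) ≤ Real.exp 1 := by have := Real.add_one_le_exp 1; linarith
    have h2 : Real.exp 1 ≤ Real.exp (Real.pi / 2) :=
      Real.exp_le_exp.2 (by linarith [Real.pi_gt_three])
    nlinarith
  have houter : ∀ z : ℂ, -1 ≤ z.re → 1 ≤ |z.im| →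
      ‖gg F z‖ ≤ 2 * C * Real.exp (Real.pi / 2) := by
    intro z h1 h2
    refine (lemCa F C α hC hα0 hαπ hFb z h1 h2).trans ?_
    have h3 : Real.exp ((α - Real.pi) * |z.im|) ≤ 1 := by
      apply Real.exp_le_one_iff.2
      nlinarith [abs_nonneg z.im]
    nlinarith [Real.exp_pos ((α - Real.pi) * |z.im|)]
  intro z hz
  rcases le_total 1 |z.im| with him | him
  · exact houter z (by linarith) him
  · -- rectangle
    set m : ℕ := ⌈z.re⌉₊ with hm
    have hmlt : -(4:ℝ)⁻¹ < (m:ℝ) + 1/2 := by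
      have : (0:ℝ) ≤ (m:ℝ) := Nat.cast_nonneg m
      norm_num
      linarith
    set U : Set ℂ := Ioo (-(4:ℝ)⁻¹) ((m:ℝ) + 1/2) ×ℂ Ioo (-1:ℝ) 1 with hU
    have hbd : IsBounded U := by
      apply (Metric.isBounded_ball (x := (0:ℂ)) (r := (m:ℝ) + 3)).subset
      intro w hw
      rw [mem_reProdIm] at hw
      obtain ⟨⟨h1, h2⟩, h3, h4⟩ := hw
      rw [Metric.mem_ball, Complex.dist_eq, sub_zero]
      have h5 := Complex.norm_le_abs_re_add_abs_im w
      have h6 : |w.re| ≤ (m:ℝ) + 1/2 := by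
        rw [abs_le]; constructor <;> nlinarith [Nat.cast_nonneg (α := ℝ) m]
      have h7 : |w.im| ≤ 1 := by rw [abs_le]; exact ⟨h3.le, h4.le⟩
      nlinarith
    have hsub : U ⊆ {w : ℂ | -1 < w.re} := by
      intro w hw
      rw [mem_reProdIm] at hw
      have := hw.1.1
      simp only [mem_setOf_eq]
      norm_num at this ⊢
      linarith
    have hclsub : closure U ⊆ {w : ℂ | -1 < w.re} := by
      rw [hU, closure_reProdIm, closure_Ioo (ne_of_lt hmlt), closure_Ioo (by norm_num : (-1:ℝ) ≠ 1)]
      intro w hw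
      rw [mem_reProdIm] at hw
      have := hw.1.1
      simp only [mem_setOf_eq]
      linarith
    have hgd := gg_diff hFd hFz
    have hdc : DiffContOnCl ℂ (gg F) U :=
      ⟨hgd.mono hsub, (hgd.continuousOn).mono hclsub⟩
    have hfront : ∀ w ∈ frontier U, ‖gg F w‖ ≤ 2 * C * Real.exp (Real.pi / 2) := by
      intro w hw
      rw [hU, frontier_reProdIm, closure_Ioo (ne_of_lt hmlt),
        frontier_Ioo (by norm_num : (-1:ℝ) < 1), frontier_Ioo hmlt,
        closure_Ioo (by norm_num : (-1:ℝ) ≠ 1)] at hw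
      rcases hw with hw | hw
      · rw [mem_reProdIm] at hw
        obtain ⟨⟨h1, h2⟩, h3⟩ := hw
        have h4 : |w.im| = 1 := by
          rcases h3 with h | h <;> rw [h] <;> norm_num
        exact houter w (by norm_num at h1 ⊢; linarith) (le_of_eq h4.symm)
      · rw [mem_reProdIm] at hw
        obtain ⟨h1, h3, h4⟩ := hw
        have h5 : |w.im| ≤ 1 := by rw [abs_le]; exact ⟨h3, h4⟩
        apply lemCb F C α hC hα0 hα hFb w ?_ h5
        rcases h1 with h | h
        · left; exact h
        · right; exact ⟨m, h⟩
    have hcl : z ∈ closure U := by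
      rw [hU, closure_reProdIm, closure_Ioo (ne_of_lt hmlt),
        closure_Ioo (by norm_num : (-1:ℝ) ≠ 1), mem_reProdIm]
      refine ⟨⟨by norm_num; linarith, ?_⟩, abs_le.1 him⟩
      have := Nat.le_ceil z.re
      rw [← hm] at this
      linarith
    have := Complex.norm_le_of_forall_mem_frontier_norm_le hbd hdc hfront hcl
    exact this


end lemC

/-- Lemma 4 of the paper (a Carlson-type theorem). A function in the
exponential space `E` (holomorphic on the open right half-plane, continuous on the closed
one, bounded by `C exp(α |Im z| + ρ Re z)` with `α < π/2`) vanishing at every positive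
integer vanishes identically on `Re z ≥ 0`. -/
theorem stmt10 (f : ℂ → ℂ) (C ρ α : ℝ) (hC : 0 < C) (hρ : 0 < ρ)
    (hα0 : 0 ≤ α) (hα : α < π / 2)
    (hf : DifferentiableOn ℂ f {z : ℂ | 0 < z.re})
    (hfc : ContinuousOn f {z : ℂ | 0 ≤ z.re})
    (hfb : ∀ z : ℂ, 0 ≤ z.re → ‖f z‖ ≤ C * Real.exp (α * |z.im| + ρ * z.re))
    (hzero : ∀ n : ℕ, 1 ≤ n → f (n : ℂ) = 0) :
    ∀ z : ℂ, 0 ≤ z.re → f z = 0 := by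
  set F : ℂ → ℂ := fun z => f (z + 1) * Complex.exp (-(ρ:ℂ) * (z + 1)) with hF
  have hUopen : IsOpen {z : ℂ | (-1:ℝ) < z.re} := isOpen_lt continuous_const Complex.continuous_re
  have hVopen : IsOpen {z : ℂ | (0:ℝ) < z.re} := isOpen_lt continuous_const Complex.continuous_re
  -- F is differentiable on {re > -1}
  have hFd : DifferentiableOn ℂ F {z : ℂ | -1 < z.re} := by
    intro z hz
    have h1 : (0:ℝ) < (z + 1).re := by
      simp only [mem_setOf_eq] at hz
      simp only [Complex.add_re, Complex.one_re]
      linarith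
    have h2 : DifferentiableAt ℂ f (z + 1) :=
      hf.differentiableAt (hVopen.mem_nhds h1)
    have h3 : DifferentiableAt ℂ (fun w : ℂ => f (w + 1)) z :=
      h2.comp z (differentiableAt_id.add_const 1)
    have h4 : DifferentiableAt ℂ (fun w : ℂ => Complex.exp (-(ρ:ℂ) * (w + 1))) z :=
      (((differentiableAt_id.add_const 1).const_mul _).cexp)
    exact (h3.mul h4).differentiableWithinAt
  -- F vanishes at the zeros of Sx in {re > -1}
  have hFz : ∀ z : ℂ, -1 < z.re → Sx z = 0 → F z = 0 := by
    intro z hz hS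
    obtain ⟨k, rfl⟩ := Sx_eq_zero_iff.1 hS
    have hk : 0 ≤ k := by
      simp only [Complex.intCast_re] at hz
      have h1 : (-1:ℤ) < k := by exact_mod_cast hz
      omega
    have hcast : ((k:ℂ)) + 1 = ((k.toNat + 1 : ℕ) : ℂ) := by
      have h2 : ((k.toNat : ℕ) : ℂ) = (k : ℂ) := by exact_mod_cast Int.toNat_of_nonneg hk
      push_cast
      rw [h2]
    rw [hF]
    simp only
    rw [hcast, hzero (k.toNat + 1) (Nat.le_add_left 1 _), zero_mul]
  -- bound for F
  have hFb : ∀ z : ℂ, -1 ≤ z.re → ‖F z‖ ≤ C * Real.exp (α * |z.im|) := by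
    intro z hz
    have h1 : (0:ℝ) ≤ (z + 1).re := by
      simp only [Complex.add_re, Complex.one_re]; linarith
    have h2 := hfb (z + 1) h1
    rw [hF]
    simp only [norm_mul, Complex.norm_exp]
    have h3 : (-(ρ:ℂ) * (z + 1)).re = -(ρ * (z.re + 1)) := by
      simp [Complex.mul_re]
    have h4 : (z+1).im = z.im := by simp
    have h5 : (z+1).re = z.re + 1 := by simp
    rw [h4, h5] at h2
    rw [h3]
    calc ‖f (z+1)‖ * Real.exp (-(ρ * (z.re + 1)))
        ≤ (C * Real.exp (α * |z.im| + ρ * (z.re + 1))) * Real.exp (-(ρ * (z.re + 1))) := by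
          apply mul_le_mul h2 le_rfl (Real.exp_pos _).le (by positivity)
      _ = C * Real.exp (α * |z.im|) := by
          rw [mul_assoc, ← Real.exp_add]
          congr 2
          ring
  -- the quotient g
  set g : ℂ → ℂ := gg F with hg
  have hgdOn : DifferentiableOn ℂ g {z : ℂ | -1 < z.re} := gg_diff hFd hFz
  have hgd : DiffContOnCl ℂ g {z : ℂ | 0 < z.re} := by
    constructor
    · exact hgdOn.mono (fun z hz => by simp only [mem_setOf_eq] at *; linarith)
    · rw [closure_setOf_lt_re]
      exact (hgdOn.continuousOn).mono (fun z hz => by simp only [mem_setOf_eq] at *; linarith)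
  set δ : ℝ := Real.pi / 2 with hδdef
  have hδ : 0 < δ := by rw [hδdef]; positivity
  set M : ℝ := 2 * C * Real.exp (Real.pi / 2) with hM
  have hM0 : 0 < M := by rw [hM]; positivity
  set K : ℝ := M * Real.exp (Real.pi / 2) with hK
  have hK0 : 0 < K := by rw [hK]; positivity
  have hMK : M ≤ K := by
    rw [hK]
    nlinarith [Real.one_le_exp (le_of_lt (by positivity : (0:ℝ) < Real.pi/2))]
  have hgM : ∀ z : ℂ, 0 ≤ z.re → ‖g z‖ ≤ M :=
    lemCd F C α hC hα0 hα.le hFd hFz hFb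
  have h4CM : 4 * C ≤ M := by
    rw [hM]
    have h1 : (2:ℝ) ≤ Real.exp 1 := by have := Real.add_one_le_exp 1; linarith
    have h2 : Real.exp 1 ≤ Real.exp (Real.pi / 2) :=
      Real.exp_le_exp.2 (by linarith [Real.pi_gt_three])
    nlinarith
  have hgim : ∀ y : ℝ, ‖g ((y:ℂ) * Complex.I)‖ ≤ K * Real.exp (-δ * |y|) := by
    intro y
    have hyre : ((y:ℂ) * Complex.I).re = 0 := by simp
    have hyim : ((y:ℂ) * Complex.I).im = y := by simp
    rcases le_total 1 |y| with hy | hy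
    · have h1 := lemCa F C α hC hα0 (by linarith [Real.pi_pos]) hFb ((y:ℂ) * Complex.I)
        (by rw [hyre]; norm_num) (by rw [hyim]; exact hy)
      rw [hyim] at h1
      refine h1.trans ?_
      have h2 : Real.exp ((α - Real.pi) * |y|) ≤ Real.exp (-δ * |y|) := by
        apply Real.exp_le_exp.2
        rw [hδdef]
        nlinarith [abs_nonneg y]
      calc 4 * C * Real.exp ((α - Real.pi) * |y|) ≤ M * Real.exp (-δ * |y|) := by
            apply mul_le_mul h4CM h2 (Real.exp_pos _).le hM0.le
        _ ≤ K * Real.exp (-δ * |y|) := by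
            apply mul_le_mul hMK le_rfl (Real.exp_pos _).le hK0.le
    · have h1 := hgM ((y:ℂ) * Complex.I) (by rw [hyre])
      refine h1.trans ?_
      rw [hK]
      have h2 : 0 ≤ Real.pi / 2 + -δ * |y| := by
        rw [hδdef]
        nlinarith [Real.pi_pos]
      have h3 : Real.exp (Real.pi/2) * Real.exp (-δ * |y|) =
          Real.exp (Real.pi/2 + -δ*|y|) := (Real.exp_add _ _).symm
      nlinarith [mul_le_mul_of_nonneg_left (Real.one_le_exp h2) hM0.le, h3]
  -- the inductive decay
  have hind : ∀ n : ℕ, ∀ z : ℂ, 0 ≤ z.re →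
      ‖g z‖ * Real.exp ((n * δ) * z.re) ≤ K * Real.exp (-δ * |z.im|) := by
    intro n
    induction n with
    | zero =>
      have := lemA g K δ M 0 hδ le_rfl hM0.le hgd
        (fun z hz => by simpa using hgM z hz)
        (fun x hx => (hgM x (by simp [hx])).trans hMK)
        hgim
      intro z hz
      simpa using this z hz
    | succ n ih =>
      set φ : ℂ → ℂ := fun w => Complex.exp ((↑(n * δ) : ℂ) * w) • g w with hφ
      have hφabs : ∀ w : ℂ, ‖φ w‖ =
          ‖g w‖ * Real.exp ((n * δ) * w.re) := by
        intro w
        rw [hφ]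
        simp only [smul_eq_mul, norm_mul, Complex.norm_exp, Complex.re_ofReal_mul]
        ring
      have hφd : DiffContOnCl ℂ φ {z : ℂ | 0 < z.re} :=
        ((differentiable_id.const_mul _).cexp.diffContOnCl).smul hgd
      have hφP : ∀ z : ℂ, 0 ≤ z.re →
          ‖φ z‖ ≤ K * Real.exp (-δ * |z.im|) := by
        intro z hz
        rw [hφabs]
        exact ih z hz
      have hre' := lemB φ K δ hδ hK0.le hφd hφP
      -- now lemA for φ₊ = g * exp((n+1)δ z)
      set ψ : ℂ → ℂ := fun w => Complex.exp ((↑((n+1) * δ) : ℂ) * w) • g w with hψ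
      have hψabs : ∀ w : ℂ, ‖ψ w‖ =
          ‖g w‖ * Real.exp (((n+1) * δ) * w.re) := by
        intro w
        rw [hψ]
        simp only [smul_eq_mul, norm_mul, Complex.norm_exp, Complex.re_ofReal_mul]
        ring
      have hψd : DiffContOnCl ℂ ψ {z : ℂ | 0 < z.re} :=
        ((differentiable_id.const_mul _).cexp.diffContOnCl).smul hgd
      have hψgrow : ∀ z : ℂ, 0 ≤ z.re →
          ‖ψ z‖ ≤ M * Real.exp (((n+1) * δ) * ‖z‖) := by
        intro z hz
        rw [hψabs]
        apply mul_le_mul (hgM z hz) (Real.exp_le_exp.2 ?_) (Real.exp_pos _).le hM0.le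
        have h1 : z.re ≤ ‖z‖ := Complex.re_le_norm z
        have h2 : (0:ℝ) ≤ (n+1) * δ := by positivity
        nlinarith
      have hψre : ∀ x : ℝ, 0 ≤ x → ‖ψ x‖ ≤ K := by
        intro x hx
        have h1 := hre' x hx
        rw [hφabs] at h1
        rw [hψabs]
        simp only [Complex.ofReal_re] at *
        calc ‖g x‖ * Real.exp ((n+1) * δ * x)
            = ‖g x‖ * Real.exp (n * δ * x) * Real.exp (δ * x) := by
              have h9 : ((n:ℝ)+1) * δ * x = (n:ℝ) * δ * x + δ * x := by ring
              rw [h9, Real.exp_add, ← mul_assoc]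
          _ ≤ K := h1
      have hψim : ∀ y : ℝ, ‖ψ ((y:ℂ) * Complex.I)‖ ≤ K * Real.exp (-δ * |y|) := by
        intro y
        rw [hψabs]
        have h1 : ((y:ℂ) * Complex.I).re = 0 := by simp
        rw [h1, mul_zero, Real.exp_zero, mul_one]
        exact hgim y
      have := lemA ψ K δ M ((n+1) * δ) hδ (by positivity) hM0.le hψd hψgrow hψre hψim
      intro z hz
      have h2 := this z hz
      rw [hψabs] at h2
      have h3 : ((n:ℝ)+1) * δ = ((n+1 : ℕ) : ℝ) * δ := by push_cast; ring
      rw [← h3]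
      exact h2
  -- conclude g = 0 on the open half-plane
  have hgz : ∀ z : ℂ, 0 < z.re → g z = 0 := by
    intro z hz
    by_contra hne
    have habs : 0 < ‖g z‖ := norm_pos_iff.2 hne
    have h1 : ∀ n : ℕ, ‖g z‖ * (Real.exp (δ * z.re))^n ≤ K := by
      intro n
      have h2 := hind n z hz.le
      have h3 : Real.exp ((n * δ) * z.re) = (Real.exp (δ * z.re))^n := by
        rw [← Real.exp_nat_mul]
        congr 1
        ring
      rw [h3] at h2
      refine h2.trans ?_
      nlinarith [Real.exp_le_one_iff.2 (by nlinarith [abs_nonneg z.im] : -δ * |z.im| ≤ 0), hK0]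
    have h2 : Tendsto (fun n : ℕ => ‖g z‖ * (Real.exp (δ * z.re))^n)
        atTop atTop := by
      apply Tendsto.const_mul_atTop habs
      apply tendsto_pow_atTop_atTop_of_one_lt
      rw [Real.one_lt_exp_iff]
      positivity
    obtain ⟨n, hn⟩ := (h2.eventually (eventually_gt_atTop K)).exists
    exact absurd (h1 n) (not_le.2 hn)
  -- F = 0 near 5/2, hence f = 0 near 7/2... f = 0 on ball
  have hball : ∀ w : ℂ, w ∈ Metric.ball ((5/2 : ℝ) : ℂ) (1/4 : ℝ) → f w = 0 := by
    intro w hw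
    rw [Metric.mem_ball, Complex.dist_eq] at hw
    have hre' : |w.re - 5/2| < 1/4 := by
      have h1 : (w - ((5/2:ℝ):ℂ)).re = w.re - 5/2 := by simp
      have := Complex.abs_re_le_norm (w - ((5/2:ℝ):ℂ))
      rw [h1] at this
      linarith
    have him' : |w.im| < 1/4 := by
      have h1 : (w - ((5/2:ℝ):ℂ)).im = w.im := by simp
      have := Complex.abs_im_le_norm (w - ((5/2:ℝ):ℂ))
      rw [h1] at this
      linarith
    rw [abs_lt] at hre' him'
    set z : ℂ := w - 1 with hz
    have hzre : 0 < z.re := by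
      rw [hz]
      simp only [Complex.sub_re, Complex.one_re]
      linarith
    have hSz : Sx z ≠ 0 := by
      rw [Ne, Sx_eq_zero_iff]
      rintro ⟨k, hk⟩
      have h1 : z.re = (k:ℝ) := by rw [hk]; simp
      rw [hz] at h1
      simp only [Complex.sub_re, Complex.one_re] at h1
      have h2 : (k:ℝ) < 7/4 := by linarith
      have h3 : (5/4 : ℝ) < (k:ℝ) := by linarith
      have h4 : (k:ℤ) ≤ 1 ∨ 2 ≤ (k:ℤ) := by omega
      rcases h4 with h4 | h4
      · have : ((k:ℤ):ℝ) ≤ 1 := by exact_mod_cast h4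
        linarith
      · have : (2:ℝ) ≤ ((k:ℤ):ℝ) := by exact_mod_cast h4
        linarith
    have hgz' := hgz z hzre
    rw [hg, gg, if_neg hSz, div_eq_zero_iff] at hgz'
    have hFz' : F z = 0 := by
      rcases hgz' with h | h
      · exact h
      · exact absurd h hSz
    rw [hF] at hFz'
    simp only at hFz'
    have hz1 : z + 1 = w := by rw [hz]; ring
    rw [hz1] at hFz'
    rcases mul_eq_zero.1 hFz' with h | h
    · exact h
    · exact absurd h (Complex.exp_ne_zero _)
  -- identity theorem
  have hEq : EqOn f 0 {z : ℂ | 0 < z.re} := by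
    have hfa : AnalyticOnNhd ℂ f {z : ℂ | 0 < z.re} := hf.analyticOnNhd hVopen
    have hpre : IsPreconnected {z : ℂ | 0 < z.re} :=
      (convex_halfSpace_re_gt 0).isPreconnected
    have hmem : ((5/2 : ℝ) : ℂ) ∈ {z : ℂ | 0 < z.re} := by
      simp only [mem_setOf_eq, Complex.ofReal_re]
      norm_num
    have hev : f =ᶠ[𝓝 ((5/2 : ℝ) : ℂ)] 0 := by
      filter_upwards [Metric.ball_mem_nhds _ (by norm_num : (0:ℝ) < 1/4)] with w hw
      exact hball w hw
    exact hfa.eqOn_zero_of_preconnected_of_eventuallyEq_zero hpre hmem hev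
  -- extend to the boundary
  have hEq2 : EqOn f 0 {z : ℂ | 0 ≤ z.re} := by
    have := EqOn.of_subset_closure hEq hfc continuousOn_const
      (fun z (hz : 0 < z.re) => le_of_lt hz) (by rw [closure_setOf_lt_re])
    exact this
  intro z hz
  exact hEq2 hz
end

section
/- Let b > 1 and let f : (0, ∞) → ℂ be continuously differentiable. Assume that for every σ ∈ (0, b) one has ∫_0^∞ e^{−x}·|f(x)|·x^{σ−1} dx < ∞ and ∫_0^∞ e^{−x}·|f′(x)|·x^{σ−1} dx < ∞, and that for every σ ∈ (0, b) the function e^{−x}·f(x)·x^{σ} tends to 0 as x → 0⁺ and as x → ∞. Define 𝒴_z f = (1/Γ(z)) ∫_0^∞ e^{−x}·f(x)·x^{z−1} dx. Then for every z with 1 < Re z < b one has 𝒴_z(f′) = 𝒴_z f − 𝒴_{z−1} f; that is, (1/Γ(z)) ∫_0^∞ e^{−x} f′(x) x^{z−1} dx = (1/Γ(z)) ∫_0^∞ e^{−x} f(x) x^{z−1} dx − (1/Γ(z−1)) ∫_0^∞ e^{−x} f(x) x^{z−2} dx. -/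
open Complex MeasureTheory Real Set Filter

lemma aux_integrable (g : ℝ → ℂ) (hgc : ContinuousOn g (Set.Ioi (0:ℝ))) (w : ℂ)
    (hint : IntegrableOn (fun x : ℝ => Real.exp (-x) * ‖g x‖ * x ^ w.re)
      (Set.Ioi (0:ℝ))) :
    IntegrableOn (fun x : ℝ => (Real.exp (-x) : ℂ) * g x * (x : ℂ) ^ w) (Set.Ioi (0:ℝ)) := by
  apply Integrable.mono' hint
  · apply ContinuousOn.aestronglyMeasurable _ measurableSet_Ioi
    apply ContinuousOn.mul
    · exact ((Complex.continuous_ofReal.comp (Real.continuous_exp.comp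
        continuous_neg)).continuousOn).mul hgc
    · intro x hx
      exact (Complex.continuousAt_ofReal_cpow_const _ _
        (Or.inr (ne_of_gt hx))).continuousWithinAt
  · filter_upwards [ae_restrict_mem measurableSet_Ioi] with x hx
    have hx0 : (0:ℝ) < x := hx
    rw [norm_mul, norm_mul, Complex.norm_real, Real.norm_eq_abs,
      abs_of_pos (Real.exp_pos _),
      Complex.norm_cpow_eq_rpow_re_of_pos hx0]

/-- The fundamental property of the Twisted Mellin transform
`𝒴_z f = (1/Γ(z)) ∫_0^∞ e^{-x} f(x) x^{z-1} dx`: it intertwines differentiation with the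
backwards difference, `𝒴_z (f′) = 𝒴_z f − 𝒴_{z-1} f` for `1 < Re z < b`. -/
theorem stmt13 (b : ℝ) (hb : 1 < b) (f f' : ℝ → ℂ)
    (hderiv : ∀ x : ℝ, 0 < x → HasDerivAt f (f' x) x)
    (hcont : ContinuousOn f' (Set.Ioi (0 : ℝ)))
    (hint : ∀ σ ∈ Set.Ioo (0 : ℝ) b,
      IntegrableOn (fun x : ℝ => Real.exp (-x) * ‖f x‖ * x ^ (σ - 1))
        (Set.Ioi (0 : ℝ)))
    (hint' : ∀ σ ∈ Set.Ioo (0 : ℝ) b,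
      IntegrableOn (fun x : ℝ => Real.exp (-x) * ‖f' x‖ * x ^ (σ - 1))
        (Set.Ioi (0 : ℝ)))
    (hzero : ∀ σ ∈ Set.Ioo (0 : ℝ) b,
      Filter.Tendsto (fun x : ℝ => (Real.exp (-x) : ℂ) * f x * ((x ^ σ : ℝ) : ℂ))
        (nhdsWithin 0 (Set.Ioi (0 : ℝ))) (nhds 0))
    (hinfty : ∀ σ ∈ Set.Ioo (0 : ℝ) b,
      Filter.Tendsto (fun x : ℝ => (Real.exp (-x) : ℂ) * f x * ((x ^ σ : ℝ) : ℂ))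
        Filter.atTop (nhds 0)) :
    ∀ z : ℂ, 1 < z.re → z.re < b →
      (1 / Complex.Gamma z) *
          ∫ x in Set.Ioi (0 : ℝ), (Real.exp (-x) : ℂ) * f' x * (x : ℂ) ^ (z - 1) =
        (1 / Complex.Gamma z) *
            (∫ x in Set.Ioi (0 : ℝ), (Real.exp (-x) : ℂ) * f x * (x : ℂ) ^ (z - 1)) -
          (1 / Complex.Gamma (z - 1)) *
            (∫ x in Set.Ioi (0 : ℝ), (Real.exp (-x) : ℂ) * f x * (x : ℂ) ^ (z - 2)) := by
  intro z hz1 hzb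
  have hfc : ContinuousOn f (Set.Ioi (0:ℝ)) :=
    fun x hx => (hderiv x hx).continuousAt.continuousWithinAt
  set T1 : ℝ → ℂ := fun x => (Real.exp (-x) : ℂ) * f x * (x : ℂ) ^ (z - 1) with hT1
  set T2 : ℝ → ℂ := fun x => (Real.exp (-x) : ℂ) * f' x * (x : ℂ) ^ (z - 1) with hT2
  set T3 : ℝ → ℂ := fun x => (Real.exp (-x) : ℂ) * f x * (x : ℂ) ^ (z - 2) with hT3
  -- integrability
  have int1 : IntegrableOn T1 (Set.Ioi (0:ℝ)) := by
    apply aux_integrable f hfc (z - 1)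
    have h := hint z.re ⟨by linarith, hzb⟩
    have e : z.re - 1 = (z - 1).re := by simp
    rw [e] at h
    exact h
  have int2 : IntegrableOn T2 (Set.Ioi (0:ℝ)) := by
    apply aux_integrable f' hcont (z - 1)
    have h := hint' z.re ⟨by linarith, hzb⟩
    have e : z.re - 1 = (z - 1).re := by simp
    rw [e] at h
    exact h
  have int3 : IntegrableOn T3 (Set.Ioi (0:ℝ)) := by
    apply aux_integrable f hfc (z - 2)
    have h := hint (z.re - 1) ⟨by linarith, by linarith⟩
    have e : z.re - 1 - 1 = (z - 2).re := by simp; ring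
    rw [e] at h
    exact h
  set G : ℝ → ℂ := fun x => T2 x - T1 x + (z - 1) * T3 x with hG
  have hFderiv : ∀ x : ℝ, 0 < x → HasDerivAt T1 (G x) x := by
    intro x hx
    have hA : HasDerivAt (fun y : ℝ => (Real.exp (-y) : ℂ)) (-Real.exp (-x) : ℝ) x := by
      have : HasDerivAt (fun y : ℝ => Real.exp (-y)) (Real.exp (-x) * (-1)) x :=
        (hasDerivAt_neg x).exp
      simpa using this.ofReal_comp
    have hid : HasDerivAt (fun y : ℝ => (y : ℂ)) 1 x := by
      simpa using (hasDerivAt_id x).ofReal_comp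
    have hC : HasDerivAt (fun y : ℝ => (y : ℂ) ^ (z - 1)) ((z - 1) * (x : ℂ) ^ (z - 2)) x := by
      have := (Complex.hasStrictDerivAt_cpow_const (c := z - 1)
        (Complex.ofReal_mem_slitPlane.mpr hx)).hasDerivAt.comp_ofReal (z := x)
      have e : z - 1 - 1 = z - 2 := by ring
      simpa [e] using this
    have key := ((hA.mul (hderiv x hx)).mul hC)
    have hGx : G x = (((-Real.exp (-x) : ℝ) : ℂ) * f x + (Real.exp (-x) : ℂ) * f' x)
        * (x : ℂ) ^ (z - 1) + (Real.exp (-x) : ℂ) * f x * ((z - 1) * (x : ℂ) ^ (z - 2)) := by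
      simp only [hG, hT1, hT2, hT3]
      push_cast
      ring
    rw [hT1, hGx]
    exact key
  -- norm of T1
  have hFnorm : ∀ x : ℝ, 0 < x →
      ‖T1 x‖ = ‖(Real.exp (-x) : ℂ) * f x * ((x ^ (z.re - 1) : ℝ) : ℂ)‖ := by
    intro x hx
    simp only [hT1, norm_mul, Complex.norm_real, Real.norm_eq_abs,
      Complex.norm_cpow_eq_rpow_re_of_pos hx]
    rw [abs_of_pos (Real.rpow_pos_of_pos hx (z.re - 1)), Complex.sub_re, Complex.one_re]
  have hσ' : z.re - 1 ∈ Set.Ioo (0:ℝ) b := ⟨by linarith, by linarith⟩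
  -- limit at 0⁺
  have hF0 : Tendsto T1 (nhdsWithin 0 (Set.Ioi (0:ℝ))) (nhds 0) := by
    rw [tendsto_zero_iff_norm_tendsto_zero]
    have h := hzero _ hσ'
    rw [tendsto_zero_iff_norm_tendsto_zero] at h
    apply h.congr'
    filter_upwards [self_mem_nhdsWithin] with x hx
    exact (hFnorm x hx).symm
  -- limit at ∞
  have hFtop : Tendsto T1 atTop (nhds 0) := by
    rw [tendsto_zero_iff_norm_tendsto_zero]
    have h := hinfty _ hσ'
    rw [tendsto_zero_iff_norm_tendsto_zero] at h
    apply h.congr'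
    filter_upwards [eventually_gt_atTop (0:ℝ)] with x hx
    exact (hFnorm x hx).symm
  have intA : IntegrableOn (fun x => T2 x - T1 x) (Set.Ioi (0:ℝ)) := int2.sub int1
  have intB : IntegrableOn (fun x => (z - 1) * T3 x) (Set.Ioi (0:ℝ)) := int3.const_mul (z - 1)
  have intG : IntegrableOn G (Set.Ioi (0:ℝ)) := intA.add intB
  -- for each ε > 0 : ∫_{Ioi ε} G = - T1 ε
  have key : ∀ ε : ℝ, 0 < ε → ∫ x in Set.Ioi ε, G x = -T1 ε := by
    intro ε hε
    have h := MeasureTheory.integral_Ioi_of_hasDerivAt_of_tendsto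
      (f := T1) (f' := G) (a := ε) (m := 0)
      ((hFderiv ε hε).continuousAt.continuousWithinAt)
      (fun x hx => hFderiv x (lt_trans hε hx))
      (intG.mono_set (Ioi_subset_Ioi hε.le)) hFtop
    rw [h]; ring
  -- conclude ∫_{Ioi 0} G = 0
  have hG0 : ∫ x in Set.Ioi (0:ℝ), G x = 0 := by
    have hsets : (⋃ n : ℕ, Set.Ioi ((1:ℝ)/(n+1))) = Set.Ioi (0:ℝ) := by
      ext x
      simp only [Set.mem_iUnion, Set.mem_Ioi]
      constructor
      · rintro ⟨n, hn⟩
        exact lt_trans (by positivity) hn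
      · intro hx
        obtain ⟨n, hn⟩ := exists_nat_one_div_lt hx
        exact ⟨n, hn⟩
    have hmono : Monotone (fun n : ℕ => Set.Ioi ((1:ℝ)/(n+1))) := by
      intro m n hmn
      apply Ioi_subset_Ioi
      have hc : (m:ℝ) + 1 ≤ (n:ℝ) + 1 := by exact_mod_cast Nat.succ_le_succ hmn
      exact one_div_le_one_div_of_le (by positivity) hc
    have ht := MeasureTheory.tendsto_setIntegral_of_monotone
      (fun n : ℕ => measurableSet_Ioi) hmono (by rw [hsets]; exact intG)
    rw [hsets] at ht
    have ht2 : Tendsto (fun n : ℕ => ∫ x in Set.Ioi ((1:ℝ)/(n+1)), G x) atTop (nhds 0) := by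
      have hε : Tendsto (fun n : ℕ => (1:ℝ)/(n+1)) atTop (nhdsWithin 0 (Set.Ioi (0:ℝ))) := by
        apply tendsto_nhdsWithin_of_tendsto_nhds_of_eventually_within
        · exact tendsto_one_div_add_atTop_nhds_zero_nat
        · filter_upwards with n
          exact Set.mem_Ioi.mpr (by positivity)
      have h2 := (hF0.comp hε).neg
      rw [neg_zero] at h2
      apply h2.congr
      intro n
      exact (key _ (by positivity)).symm
    exact tendsto_nhds_unique ht ht2
  -- unfold G
  have hG0' : (∫ x in Set.Ioi (0:ℝ), (T2 x - T1 x))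
      + ∫ x in Set.Ioi (0:ℝ), (z - 1) * T3 x = 0 := by
    rw [← MeasureTheory.integral_add intA intB]
    exact hG0
  rw [MeasureTheory.integral_sub int2 int1, MeasureTheory.integral_const_mul] at hG0'
  -- Gamma identity
  have hz10 : z - 1 ≠ 0 := by
    intro h
    have h2 : (z - 1).re = 0 := by rw [h]; simp
    rw [Complex.sub_re, Complex.one_re] at h2
    linarith
  have hΓ : Complex.Gamma z = (z - 1) * Complex.Gamma (z - 1) := by
    have := Complex.Gamma_add_one (z - 1) hz10
    simpa using this
  have hΓz : Complex.Gamma z ≠ 0 := Complex.Gamma_ne_zero_of_re_pos (by linarith)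
  have hΓz1 : Complex.Gamma (z - 1) ≠ 0 := by
    apply Complex.Gamma_ne_zero_of_re_pos
    simp only [Complex.sub_re, Complex.one_re]
    linarith
  have hT2eq : (∫ x in Set.Ioi (0:ℝ), T2 x)
      = (∫ x in Set.Ioi (0:ℝ), T1 x) - (z - 1) * ∫ x in Set.Ioi (0:ℝ), T3 x := by
    linear_combination hG0'
  show (1 / Complex.Gamma z) * ∫ x in Set.Ioi (0:ℝ), T2 x
      = (1 / Complex.Gamma z) * (∫ x in Set.Ioi (0:ℝ), T1 x)
        - (1 / Complex.Gamma (z - 1)) * ∫ x in Set.Ioi (0:ℝ), T3 x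
  rw [hT2eq, hΓ]
  field_simp
end

section
/- Let f : ℕ → ℂ. For q ∈ ℂ with Re q > 0 define the discrete differsum operator (A_q f)(n) = ∑_{j=1}^{n} f(j) · Γ(n − j + q) / ( Γ(q) · Γ(n − j + 1) ) for integers n ≥ 1, with (A_q f)(0) = 0. Then: (i) (A_1 f)(n) = ∑_{j=1}^{n} f(j) for all n; and (ii) for all q₁, q₂ ∈ ℂ with Re q₁ > 0 and Re q₂ > 0 and all n ≥ 0, (A_{q₂}(A_{q₁} f))(n) = (A_{q₁ + q₂} f)(n). That is, the operators A_q form a semigroup in q extending iterated summation. -/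
open Complex Finset Nat

/-- The discrete differsum operator of the paper restricted to the nonnegative integers:
`(A_q f)(n) = ∑_{j=1}^n f(j) Γ(n-j+q) / (Γ(q) Γ(n-j+1))`, and `(A_q f)(0) = 0`. -/
noncomputable def differsum (q : ℂ) (f : ℕ → ℂ) (n : ℕ) : ℂ :=
  ∑ j ∈ Finset.Icc 1 n,
    f j * Complex.Gamma (((n - j : ℕ) : ℂ) + q) /
      (Complex.Gamma q * Complex.Gamma (((n - j : ℕ) : ℂ) + 1))

/-- Rising factorial. -/
noncomputable def poch (q : ℂ) (k : ℕ) : ℂ := ∏ i ∈ Finset.range k, (q + i)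

lemma poch_succ (q : ℂ) (k : ℕ) : poch q (k + 1) = poch q k * (q + k) := by
  simp [poch, Finset.prod_range_succ]

lemma poch_one (k : ℕ) : poch 1 k = (k ! : ℂ) := by
  induction k with
  | zero => simp [poch]
  | succ k ih =>
    rw [poch_succ, ih, Nat.factorial_succ]
    push_cast; ring

lemma gamma_nat_add (q : ℂ) (hq : 0 < q.re) (k : ℕ) :
    Complex.Gamma ((k : ℂ) + q) = poch q k * Complex.Gamma q := by
  induction k with
  | zero => simp [poch]
  | succ k ih =>
    have hne : (k : ℂ) + q ≠ 0 := by
      intro h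
      have h1 := congrArg Complex.re h
      simp [Complex.add_re] at h1
      have h2 : (0 : ℝ) ≤ (k : ℝ) := Nat.cast_nonneg k
      linarith
    rw [show ((k + 1 : ℕ) : ℂ) + q = ((k : ℂ) + q) + 1 by push_cast; ring,
      Complex.Gamma_add_one _ hne, ih, poch_succ]
    ring

lemma gamma_q_ne_zero (q : ℂ) (hq : 0 < q.re) : Complex.Gamma q ≠ 0 := by
  apply Complex.Gamma_ne_zero
  intro m h
  rw [h] at hq
  simp at hq
  have : (0 : ℝ) ≤ (m : ℝ) := Nat.cast_nonneg m
  linarith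

/-- The Gamma ratio is `poch q m / m!`. -/
lemma G_eq (q : ℂ) (hq : 0 < q.re) (m : ℕ) :
    Complex.Gamma ((m : ℂ) + q) / (Complex.Gamma q * Complex.Gamma ((m : ℂ) + 1)) =
      poch q m / (m ! : ℂ) := by
  have hg := gamma_q_ne_zero q hq
  have hf : (m ! : ℂ) ≠ 0 := Nat.cast_ne_zero.mpr (Nat.factorial_ne_zero m)
  rw [gamma_nat_add q hq, Complex.Gamma_nat_eq_factorial]
  field_simp

/-- Chu–Vandermonde for rising factorials. -/
lemma vandermonde (a b : ℂ) : ∀ m : ℕ,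
    ∑ k ∈ Finset.range (m + 1),
      (m.choose k : ℂ) * (poch a k * poch b (m - k)) = poch (a + b) m := by
  intro m
  induction m with
  | zero => simp [poch]
  | succ m ih =>
    have key : poch (a + b) (m + 1)
        = ∑ k ∈ Finset.range (m + 1),
            (m.choose k : ℂ) * (poch a (k + 1) * poch b (m - k))
        + ∑ k ∈ Finset.range (m + 1),
            (m.choose k : ℂ) * (poch a k * poch b (m + 1 - k)) := by
      rw [poch_succ, ← ih, Finset.sum_mul, ← Finset.sum_add_distrib]
      refine Finset.sum_congr rfl fun k hk => ?_
      have hkm : k ≤ m := Nat.lt_succ_iff.mp (Finset.mem_range.mp hk)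
      have h1 : ((m - k : ℕ) : ℂ) = (m : ℂ) - k := by
        push_cast [hkm]; ring
      have h2 : m + 1 - k = (m - k) + 1 := by omega
      rw [h2, poch_succ, poch_succ, h1]
      ring
    have hsecond : ∑ k ∈ Finset.range (m + 1),
        (m.choose k : ℂ) * (poch a k * poch b (m + 1 - k))
        = ∑ k ∈ Finset.range (m + 2),
            (m.choose k : ℂ) * (poch a k * poch b (m + 1 - k)) := by
      rw [Finset.sum_range_succ (n := m + 1)]
      simp [Nat.choose_succ_self]
    rw [key, hsecond]
    rw [Finset.sum_range_succ' (n := m + 1)]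
    rw [Finset.sum_range_succ' (n := m + 1)
      (f := fun k => (m.choose k : ℂ) * (poch a k * poch b (m + 1 - k)))]
    simp only [Nat.choose_zero_right, Nat.cast_one, one_mul, Nat.sub_zero,
      Nat.add_sub_add_right]
    have hmain : ∑ k ∈ Finset.range (m + 1),
        ((m + 1).choose (k + 1) : ℂ) * (poch a (k + 1) * poch b (m - k))
        = ∑ k ∈ Finset.range (m + 1), (m.choose k : ℂ) * (poch a (k + 1) * poch b (m - k))
        + ∑ k ∈ Finset.range (m + 1), (m.choose (k + 1) : ℂ) * (poch a (k + 1) * poch b (m - k)) := by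
      rw [← Finset.sum_add_distrib]
      refine Finset.sum_congr rfl fun k hk => ?_
      rw [Nat.choose_succ_succ]
      push_cast; ring
    rw [hmain]
    ring

/-- key convolution identity -/
lemma conv (q₁ q₂ : ℂ) (m : ℕ) :
    ∑ k ∈ Finset.range (m + 1),
      poch q₁ k / (k ! : ℂ) * (poch q₂ (m - k) / ((m - k)! : ℂ))
      = poch (q₁ + q₂) m / (m ! : ℂ) := by
  rw [← vandermonde q₁ q₂ m, Finset.sum_div]
  refine Finset.sum_congr rfl fun k hk => ?_
  have hkm : k ≤ m := Nat.lt_succ_iff.mp (Finset.mem_range.mp hk)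
  have hk0 : (k ! : ℂ) ≠ 0 := Nat.cast_ne_zero.mpr (Nat.factorial_ne_zero k)
  have hmk0 : ((m - k)! : ℂ) ≠ 0 := Nat.cast_ne_zero.mpr (Nat.factorial_ne_zero (m - k))
  have hm0 : (m ! : ℂ) ≠ 0 := Nat.cast_ne_zero.mpr (Nat.factorial_ne_zero m)
  have hch : (m.choose k : ℂ) = (m ! : ℂ) / ((k ! : ℂ) * ((m - k)! : ℂ)) := by
    rw [eq_div_iff (mul_ne_zero hk0 hmk0)]
    norm_cast
    rw [← mul_assoc]
    exact Nat.choose_mul_factorial_mul_factorial hkm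
  rw [hch]
  field_simp

lemma differsum_eq (q : ℂ) (hq : 0 < q.re) (f : ℕ → ℂ) (n : ℕ) :
    differsum q f n = ∑ j ∈ Finset.Icc 1 n, f j * (poch q (n - j) / ((n - j)! : ℂ)) := by
  unfold differsum
  refine Finset.sum_congr rfl fun j hj => ?_
  rw [mul_div_assoc, G_eq q hq]

/-- The discrete differsum operators `A_q` extend iterated summation
(`A_1` is the partial-sum operator) and form a semigroup in `q`:
`A_{q₂} ∘ A_{q₁} = A_{q₁+q₂}` for `Re q₁ > 0`, `Re q₂ > 0`. -/
theorem stmt16 (f : ℕ → ℂ) :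
    (∀ n : ℕ, differsum 1 f n = ∑ j ∈ Finset.Icc 1 n, f j) ∧
    (∀ q₁ q₂ : ℂ, 0 < q₁.re → 0 < q₂.re → ∀ n : ℕ,
      differsum q₂ (differsum q₁ f) n = differsum (q₁ + q₂) f n) := by
  constructor
  · intro n
    rw [differsum_eq 1 (by norm_num) f n]
    refine Finset.sum_congr rfl fun j hj => ?_
    rw [poch_one, div_self (Nat.cast_ne_zero.mpr (Nat.factorial_ne_zero _)), mul_one]
  · intro q₁ q₂ h1 h2 n
    have h12 : 0 < (q₁ + q₂).re := by simp [Complex.add_re]; linarith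
    rw [differsum_eq q₂ h2, differsum_eq (q₁ + q₂) h12]
    have step1 : ∀ j ∈ Finset.Icc 1 n, differsum q₁ f j * (poch q₂ (n - j) / ((n - j)! : ℂ))
        = ∑ i ∈ Finset.Icc 1 j, f i * (poch q₁ (j - i) / ((j - i)! : ℂ))
            * (poch q₂ (n - j) / ((n - j)! : ℂ)) := by
      intro j hj
      rw [differsum_eq q₁ h1, Finset.sum_mul]
    rw [Finset.sum_congr rfl step1]
    rw [Finset.sum_comm' (t' := Finset.Icc 1 n) (s' := fun i => Finset.Icc i n)
      (by intro j i; simp only [Finset.mem_Icc]; omega)]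
    refine Finset.sum_congr rfl fun i hi => ?_
    rw [← Finset.Ico_add_one_right_eq_Icc, Finset.sum_Ico_eq_sum_range]
    have hi' : 1 ≤ i ∧ i ≤ n := Finset.mem_Icc.mp hi
    have hrange : n + 1 - i = (n - i) + 1 := by omega
    rw [hrange]
    have hcong : ∀ k ∈ Finset.range ((n - i) + 1),
        f i * (poch q₁ ((i + k) - i) / (((i + k) - i)! : ℂ))
          * (poch q₂ (n - (i + k)) / ((n - (i + k))! : ℂ))
        = f i * (poch q₁ k / (k ! : ℂ) * (poch q₂ ((n - i) - k) / (((n - i) - k)! : ℂ))) := by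
      intro k hk
      have e1 : (i + k) - i = k := by omega
      have e2 : n - (i + k) = (n - i) - k := by omega
      rw [e1, e2]; ring
    rw [Finset.sum_congr rfl hcong, ← Finset.mul_sum, conv q₁ q₂ (n - i)]
end
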